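/- arXiv:1809.00389 — 10 statements merged into one kernel-verified Lean document; each statement's English description precedes it below -/
import Mathlib

section
/- Let Θ be a real antisymmetric n×n matrix and R a real symmetric positive semi-definite n×n matrix. Then every complex eigenvalue of the matrix A := 2ΘR is purely imaginary (has zero real part). In particular, A is isospectral to the real antisymmetric matrix 2√R Θ √R, where √R denotes the positive semi-definite square root of R. -/
open Matrix

/-- The positive semi-definite square root, as `Matrix.PosSemidef.sqrt` was defined in the
older Mathlib (removed since). -/
noncomputable def Matrix.PosSemidef.sqrt {m 𝕜 : Type*} [Fintype m] [DecidableEq m] [RCLike 𝕜]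
    [PartialOrder 𝕜] {M : Matrix m m 𝕜} (hM : M.PosSemidef) : Matrix m m 𝕜 :=
  hM.1.eigenvectorUnitary.1 * diagonal ((↑) ∘ Real.sqrt ∘ hM.1.eigenvalues) *
    (star hM.1.eigenvectorUnitary : Matrix m m 𝕜)

private lemma herm_spec_im {n : ℕ} {H : Matrix (Fin n) (Fin n) ℂ} (hH : H.IsHermitian)
    {μ : ℂ} (h : μ ∈ spectrum ℂ H) : μ.im = 0 := by
  rw [hH.spectral_theorem, Unitary.conjStarAlgAut_apply, Unitary.spectrum_star_right_conjugate,
    spectrum_diagonal] at h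
  obtain ⟨i, rfl⟩ := h
  simp

/-- For a real antisymmetric `Θ` and a real symmetric positive semi-definite
`R`, every complex eigenvalue of `A := 2ΘR` is purely imaginary; moreover `A` is isospectral
to the real antisymmetric matrix `2√R Θ √R`, where `√R` is the positive semi-definite
square root of `R`. -/
theorem eigenvalues_purely_imaginary_of_two_theta_R {n : ℕ}
    (Θ R A : Matrix (Fin n) (Fin n) ℝ)
    (hΘ : Θᵀ = -Θ) (hR : R.PosSemidef)
    (hA : A = (2 : ℝ) • (Θ * R)) :
    (∀ μ ∈ spectrum ℂ (A.map (Complex.ofReal · : ℝ → ℂ)), μ.re = 0)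
    ∧ spectrum ℂ (A.map (Complex.ofReal · : ℝ → ℂ))
      = spectrum ℂ ((((2 : ℝ) • (hR.sqrt * Θ * hR.sqrt)).map (Complex.ofReal · : ℝ → ℂ))) := by
  have hfun : (Complex.ofReal · : ℝ → ℂ) = ⇑(Complex.ofRealHom) := rfl
  set S : Matrix (Fin n) (Fin n) ℝ := hR.sqrt with hSdef
  have hS : S.PosSemidef := by
    rw [hSdef, Matrix.PosSemidef.sqrt]
    have hD : (diagonal ((↑) ∘ Real.sqrt ∘ hR.1.eigenvalues) :
        Matrix (Fin n) (Fin n) ℝ).PosSemidef :=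
      posSemidef_diagonal_iff.mpr (fun i => by simp [Real.sqrt_nonneg])
    simpa [star_eq_conjTranspose, Function.comp_def] using
      hD.mul_mul_conjTranspose_same (hR.1.eigenvectorUnitary : Matrix (Fin n) (Fin n) ℝ)
  have hSS : S * S = R := by
    rw [hSdef, Matrix.PosSemidef.sqrt]
    conv_rhs => rw [hR.1.spectral_theorem, Unitary.conjStarAlgAut_apply]
    have hU := Unitary.coe_star_mul_self hR.1.eigenvectorUnitary
    rw [show ∀ a b c d e f : Matrix (Fin n) (Fin n) ℝ,
        a * b * c * (d * e * f) = a * b * (c * d) * e * f by intros; simp only [mul_assoc]]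
    rw [hU, mul_one]
    congr 1
    rw [mul_assoc]
    congr 1
    simp only [diagonal_mul_diagonal]
    congr 1
    funext i
    simp [Real.mul_self_sqrt (hR.eigenvalues_nonneg i)]
  have hSsymm : Sᵀ = S := by
    have := hS.1
    rwa [Matrix.IsHermitian, conjTranspose_eq_transpose_of_trivial] at this
  set X : Matrix (Fin n) (Fin n) ℝ := (2 : ℝ) • (Θ * S) with hXdef
  have hAX : A = X * S := by
    rw [hA, ← hSS, hXdef, smul_mul_assoc, mul_assoc]
  have hBX : (2 : ℝ) • (S * Θ * S) = S * X := by
    rw [hXdef, mul_smul_comm, mul_assoc]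
  set f := Complex.ofRealHom with hf
  -- spectrum equality
  have hspec : spectrum ℂ (A.map f) = spectrum ℂ (((2 : ℝ) • (S * Θ * S)).map f) := by
    rw [hAX, hBX, Matrix.map_mul, Matrix.map_mul]
    ext μ
    by_cases hμ : μ = 0
    · subst hμ
      rw [spectrum.zero_mem_iff, spectrum.zero_mem_iff,
        Matrix.isUnit_iff_isUnit_det, Matrix.isUnit_iff_isUnit_det, det_mul, det_mul,
        mul_comm]
    · exact spectrum.unit_mem_mul_comm (r := Units.mk0 μ hμ)
  refine ⟨?_, by rw [hfun]; exact hspec⟩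
  -- purely imaginary
  intro μ hμ
  rw [hfun, hspec] at hμ
  set B : Matrix (Fin n) (Fin n) ℝ := (2 : ℝ) • (S * Θ * S) with hBdef
  have hBskew : Bᵀ = -B := by
    rw [hBdef, transpose_smul, transpose_mul, transpose_mul, hSsymm, hΘ]
    simp [Matrix.mul_neg, Matrix.neg_mul, mul_assoc]
  have hBmapskew : (B.map f)ᴴ = -(B.map f) := by
    have h1 : (B.map f)ᴴ = Bᵀ.map f := by
      ext i j
      simp only [conjTranspose_apply, Matrix.map_apply]
      exact Complex.conj_ofReal _
    have h2 : (-B).map (⇑f) = -(B.map ⇑f) := by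
      ext i j; simp [Matrix.map_apply]
    rw [h1, hBskew, h2]
  have hH : (Complex.I • (B.map f)).IsHermitian := by
    rw [Matrix.IsHermitian, conjTranspose_smul, hBmapskew]
    simp [smul_neg]
  have hIμ : Complex.I * μ ∈ spectrum ℂ (Complex.I • (B.map f)) := by
    have := (spectrum.smul_mem_smul_iff
      (a := B.map f) (s := μ) (r := Units.mk0 Complex.I Complex.I_ne_zero)).mpr hμ
    simpa using this
  have := herm_spec_im hH hIμ
  simpa using this
end

section
/- Let α be a Hurwitz real n×n matrix and β a real symmetric positive definite n×n matrix. Then 𝐋(α, 𝐋(α, β)) ⪯ 𝐫(𝐋(α, β) β^{-1}) · 𝐋(α, β), where 𝐫(·) is the spectral radius and ⪯ is the Loewner (positive semi-definite) partial order. -/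
set_option maxHeartbeats 1000000

open Matrix MeasureTheory

attribute [local instance] Matrix.normedAddCommGroup Matrix.normedSpace

/-- A real square matrix is Hurwitz if all its complex eigenvalues have negative real part. -/
def Hurwitz {m : Type*} [Fintype m] [DecidableEq m] (M : Matrix m m ℝ) : Prop :=
  ∀ μ ∈ spectrum ℂ (M.map (Complex.ofReal · : ℝ → ℂ)), μ.re < 0

/-- `lyap α β := ∫₀^∞ e^{tα} β e^{tαᵀ} dt`, the solution of the algebraic Lyapunov
equation `αγ + γαᵀ + β = 0` when `α` is Hurwitz. -/
noncomputable def lyap {m : Type*} [Fintype m] [DecidableEq m]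
    (α β : Matrix m m ℝ) : Matrix m m ℝ :=
  ∫ t in Set.Ioi (0:ℝ), NormedSpace.exp (t • α) * β * NormedSpace.exp (t • αᵀ)

/-- Spectral radius of a real square matrix: the largest modulus of a complex eigenvalue. -/
noncomputable def specRad {m : Type*} [Fintype m] [DecidableEq m] (M : Matrix m m ℝ) : ℝ :=
  sSup ((‖·‖ : ℂ → ℝ) '' spectrum ℂ (M.map (Complex.ofReal · : ℝ → ℂ)))

noncomputable def matCENorm {n : ℕ} : ContinuousENorm (Matrix (Fin n) (Fin n) ℝ) :=
  SeminormedAddGroup.toContinuousENorm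

noncomputable def matPMS {n : ℕ} : TopologicalSpace.PseudoMetrizableSpace (Matrix (Fin n) (Fin n) ℝ) :=
  inferInstanceAs (TopologicalSpace.PseudoMetrizableSpace (Fin n → Fin n → ℝ))

attribute [local instance] matCENorm matPMS

namespace LyapAux

variable {n : ℕ}

local notation "Mat" => Matrix (Fin n) (Fin n) ℝ

lemma herm_transpose {A : Mat} (h : A.IsHermitian) : Aᵀ = A := by
  rw [← Matrix.conjTranspose_eq_transpose_of_trivial]
  exact h

/-- The transpose as a continuous linear map. -/
noncomputable def transposeCLM : Mat →L[ℝ] Mat :=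
  LinearMap.toContinuousLinearMap
  { toFun := fun M => Mᵀ
    map_add' := fun M N => Matrix.transpose_add M N
    map_smul' := fun c M => Matrix.transpose_smul c M }

@[simp] lemma transposeCLM_apply (M : Mat) : transposeCLM M = Mᵀ := rfl

/-- Evaluation of the quadratic form as a continuous linear map in the matrix. -/
noncomputable def quadCLM (x : Fin n → ℝ) : Mat →L[ℝ] ℝ :=
  LinearMap.toContinuousLinearMap
  { toFun := fun M => dotProduct x (M *ᵥ x)
    map_add' := fun M N => by simp [Matrix.add_mulVec, dotProduct_add]
    map_smul' := fun c M => by simp [Matrix.smul_mulVec, dotProduct_smul] }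

@[simp] lemma quadCLM_apply (x : Fin n → ℝ) (M : Mat) :
    quadCLM x M = dotProduct x (M *ᵥ x) := rfl

theorem posSemidef_integral {μ : Measure ℝ} {f : ℝ → Mat}
    (hf : Integrable f μ) (h : ∀ t, (f t).PosSemidef) :
    (∫ t, f t ∂μ).PosSemidef := by
  refine Matrix.PosSemidef.of_dotProduct_mulVec_nonneg ?_ ?_
  · show (∫ t, f t ∂μ)ᴴ = _
    rw [Matrix.conjTranspose_eq_transpose_of_trivial]
    have h1 := transposeCLM.integral_comp_comm hf
    change ∫ t, (f t)ᵀ ∂μ = (∫ t, f t ∂μ)ᵀ at h1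
    rw [← h1]
    congr 1
    funext t
    exact herm_transpose (h t).1
  · intro x
    have h1 := (quadCLM x).integral_comp_comm hf
    change ∫ t, dotProduct x (f t *ᵥ x) ∂μ = dotProduct x ((∫ t, f t ∂μ) *ᵥ x) at h1
    have hx : star x = x := by simp
    rw [hx, ← h1]
    refine integral_nonneg fun t => ?_
    have := (h t).dotProduct_mulVec_nonneg x
    rwa [hx] at this

theorem diag_nonneg {P : Mat} (hP : P.PosSemidef) (i : Fin n) : 0 ≤ P i i := by
  have := hP.dotProduct_mulVec_nonneg (Pi.single i (1:ℝ))
  simpa [Matrix.mulVec_single, single_dotProduct] using this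

theorem entry_abs_le {P : Mat} (hP : P.PosSemidef) (i j : Fin n) :
    |P i j| ≤ (P i i + P j j) / 2 := by
  have hsym : P j i = P i j := by
    have := hP.1.apply i j
    simpa using this
  have hplus := hP.dotProduct_mulVec_nonneg (Pi.single i (1:ℝ) + Pi.single j 1)
  have hminus := hP.dotProduct_mulVec_nonneg (Pi.single i (1:ℝ) - Pi.single j 1)
  simp [Matrix.mulVec_add, Matrix.mulVec_sub, Matrix.mulVec_single, add_dotProduct,
    sub_dotProduct, single_dotProduct, hsym] at hplus hminus
  rw [abs_le]
  constructor <;> nlinarith [hplus, hminus]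

theorem norm_le_of_posSemidef_sub {P Q : Mat} (hP : P.PosSemidef)
    (hQP : (Q - P).PosSemidef) : ‖P‖ ≤ ‖Q‖ := by
  rw [Matrix.norm_le_iff (norm_nonneg Q)]
  intro i j
  have h1 : |P i j| ≤ (P i i + P j j) / 2 := entry_abs_le hP i j
  have h2 : 0 ≤ Q i i - P i i := by simpa using diag_nonneg hQP i
  have h3 : 0 ≤ Q j j - P j j := by simpa using diag_nonneg hQP j
  have h4 : Q i i ≤ ‖Q‖ := le_trans (le_abs_self _) (Q.norm_entry_le_entrywise_sup_norm)
  have h5 : Q j j ≤ ‖Q‖ := le_trans (le_abs_self _) (Q.norm_entry_le_entrywise_sup_norm)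
  rw [Real.norm_eq_abs]
  linarith

theorem mem_spectrum_of_eigen {N : Mat} {μ : ℝ} {v : Fin n → ℝ} (hv : v ≠ 0)
    (h : N *ᵥ v = μ • v) :
    (μ : ℂ) ∈ spectrum ℂ (N.map (Complex.ofReal · : ℝ → ℂ)) := by
  rw [spectrum.mem_iff]
  intro hunit
  rw [Matrix.isUnit_iff_isUnit_det, isUnit_iff_ne_zero] at hunit
  apply hunit
  rw [← Matrix.exists_mulVec_eq_zero_iff]
  refine ⟨fun i => (v i : ℂ), ?_, ?_⟩
  · intro h0
    apply hv
    funext i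
    have := congrFun h0 i
    simp only [Pi.zero_apply] at this ⊢
    exact_mod_cast this
  · have hmv : (N.map (Complex.ofReal · : ℝ → ℂ)) *ᵥ (fun i => (v i : ℂ))
        = fun i => ((μ • v) i : ℂ) := by
      funext i
      have h2 := (RingHom.map_mulVec (Complex.ofRealHom) N v i)
      rw [h] at h2
      exact h2.symm
    funext i
    rw [Matrix.sub_mulVec]
    simp only [Pi.sub_apply, hmv]
    rw [Algebra.algebraMap_eq_smul_one]
    rw [Matrix.smul_mulVec, Matrix.one_mulVec]
    simp [Complex.ofReal_mul]

theorem abs_le_specRad {N : Mat} {μ : ℝ} {v : Fin n → ℝ} (hv : v ≠ 0)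
    (h : N *ᵥ v = μ • v) : |μ| ≤ specRad N := by
  have hmem := mem_spectrum_of_eigen hv h
  have hfin : ((‖·‖ : ℂ → ℝ) '' spectrum ℂ (N.map (Complex.ofReal · : ℝ → ℂ))).Finite :=
    (Matrix.finite_spectrum _).image _
  have hb : BddAbove ((‖·‖ : ℂ → ℝ) '' spectrum ℂ (N.map (Complex.ofReal · : ℝ → ℂ))) :=
    hfin.bddAbove
  have : ‖(μ : ℂ)‖ ∈ (‖·‖ : ℂ → ℝ) '' spectrum ℂ (N.map (Complex.ofReal · : ℝ → ℂ)) :=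
    ⟨_, hmem, rfl⟩
  have hle := le_csSup hb this
  simpa [specRad] using hle

theorem specRad_nonneg (N : Mat) : 0 ≤ specRad N :=
  Real.sSup_nonneg fun _ hx => by
    obtain ⟨z, _, rfl⟩ := hx
    exact norm_nonneg _

theorem posSemidef_of_eigen {N : Mat} (hN : N.IsHermitian)
    (h : ∀ (μ : ℝ) (v : Fin n → ℝ), v ≠ 0 → N *ᵥ v = μ • v → 0 ≤ μ) :
    N.PosSemidef := by
  refine (Matrix.IsHermitian.posSemidef_iff_eigenvalues_nonneg hN).mpr fun i => ?_
  refine h _ ⇑(hN.eigenvectorBasis i) ?_ (hN.mulVec_eigenvectorBasis i)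
  intro h0
  have hne := hN.eigenvectorBasis.toBasis.ne_zero i
  rw [OrthonormalBasis.coe_toBasis] at hne
  apply hne
  ext j
  exact congrFun h0 j

section
open scoped MatrixOrder
theorem exists_sqrt_aux {A : Mat} (hA : A.PosSemidef) : ∃ S : Mat, S.PosSemidef ∧ S * S = A :=
  ⟨CFC.sqrt A, (CFC.sqrt_nonneg A).posSemidef, CFC.sqrt_mul_sqrt_self A hA.nonneg⟩
end

/-- Key spectral fact: `γ ⪯ specRad (γ β⁻¹) • β` for `γ` psd and `β` posdef. -/
theorem loewner_le_specRad_smul {β γ : Mat} (hβ : β.PosDef) (hγ : γ.PosSemidef) :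
    (specRad (γ * β⁻¹) • β - γ).PosSemidef := by
  obtain ⟨S, hSps, hS2⟩ := exists_sqrt_aux hβ.posSemidef
  have hST : Sᵀ = S := herm_transpose hSps.1
  have hSdet : IsUnit S.det := by
    rw [isUnit_iff_ne_zero]
    intro h0
    have : β.det = 0 := by rw [← hS2, Matrix.det_mul, h0, mul_zero]
    exact hβ.det_pos.ne' this
  have hSinv : S⁻¹ * S = 1 := Matrix.nonsing_inv_mul _ hSdet
  have hSinv' : S * S⁻¹ = 1 := Matrix.mul_nonsing_inv _ hSdet
  have hSiT : S⁻¹ᵀ = S⁻¹ := by rw [Matrix.transpose_nonsing_inv, hST]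
  set M : Mat := S⁻¹ * γ * S⁻¹ with hMdef
  have hM : M.PosSemidef := by
    have : M = S⁻¹ * γ * (S⁻¹)ᴴ := by
      rw [Matrix.conjTranspose_eq_transpose_of_trivial, hSiT]
    rw [this]
    exact hγ.mul_mul_conjTranspose_same _
  set r : ℝ := specRad (γ * β⁻¹) with hrdef
  have hβinv : β⁻¹ = S⁻¹ * S⁻¹ := by rw [← hS2, Matrix.mul_inv_rev]
  have hM1 : ((r : ℝ) • (1 : Mat) - M).PosSemidef := by
    apply posSemidef_of_eigen
    · show ((r : ℝ) • (1 : Mat) - M)ᴴ = _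
      rw [Matrix.conjTranspose_eq_transpose_of_trivial, Matrix.transpose_sub,
        Matrix.transpose_smul, Matrix.transpose_one]
      congr 1
      exact herm_transpose hM.1
    · intro μ v hv heig
      have hMv : M *ᵥ v = (r - μ) • v := by
        rw [Matrix.sub_mulVec, Matrix.smul_mulVec, Matrix.one_mulVec] at heig
        rw [sub_smul]
        rw [eq_sub_iff_add_eq, ← eq_sub_iff_add_eq']
        exact heig.symm
      set w : Fin n → ℝ := S *ᵥ v with hwdef
      have hw : w ≠ 0 := by
        intro h0
        apply hv
        have : S⁻¹ *ᵥ w = v := by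
          rw [hwdef, Matrix.mulVec_mulVec, hSinv, Matrix.one_mulVec]
        rw [h0, Matrix.mulVec_zero] at this
        exact this.symm
      have heigw : (γ * β⁻¹) *ᵥ w = (r - μ) • w := by
        have lhs : (γ * β⁻¹) *ᵥ w = (γ * S⁻¹) *ᵥ v := by
          rw [hwdef, Matrix.mulVec_mulVec, hβinv]
          congr 1
          rw [Matrix.mul_assoc, Matrix.mul_assoc, hSinv, Matrix.mul_one]
        have rhs : (r - μ) • w = (γ * S⁻¹) *ᵥ v := by
          rw [hwdef, ← Matrix.mulVec_smul, ← hMv, hMdef, Matrix.mulVec_mulVec]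
          congr 1
          rw [show S * (S⁻¹ * γ * S⁻¹) = S * S⁻¹ * γ * S⁻¹ by
            simp only [Matrix.mul_assoc], hSinv', Matrix.one_mul]
        rw [lhs, rhs]
      have habs := abs_le_specRad hw heigw
      have : r - μ ≤ r := le_trans (le_abs_self _) habs
      linarith
  have hfact : S * ((r : ℝ) • (1 : Mat) - M) * Sᴴ = r • β - γ := by
    have e1 : S * ((r : ℝ) • (1 : Mat)) * S = r • β := by
      rw [Matrix.mul_smul, Matrix.mul_one, Matrix.smul_mul, hS2]
    have e2 : S * M * S = γ := by
      rw [hMdef, show S * (S⁻¹ * γ * S⁻¹) * S = S * S⁻¹ * γ * (S⁻¹ * S) by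
        simp only [Matrix.mul_assoc], hSinv', hSinv, Matrix.one_mul, Matrix.mul_one]
    rw [Matrix.conjTranspose_eq_transpose_of_trivial, hST, Matrix.mul_sub, Matrix.sub_mul, e1, e2]
  rw [← hfact]
  exact hM1.mul_mul_conjTranspose_same S

theorem exp_smul_continuous (α : Mat) :
    Continuous fun t : ℝ => NormedSpace.exp (t • α) := by
  open scoped Matrix.Norms.Operator in
  exact NormedSpace.exp_continuous.comp (continuous_id.smul continuous_const)

theorem conj_posSemidef {δ : Mat} (hδ : δ.PosSemidef) (α : Mat) (t : ℝ) :
    (NormedSpace.exp (t • α) * δ * NormedSpace.exp (t • αᵀ)).PosSemidef := by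
  have he : NormedSpace.exp (t • αᵀ) = (NormedSpace.exp (t • α))ᴴ := by
    rw [Matrix.conjTranspose_eq_transpose_of_trivial, ← Matrix.exp_transpose,
      Matrix.transpose_smul]
  rw [he]
  exact hδ.mul_mul_conjTranspose_same _

theorem conj_sub_smul (e e' A B : Mat) (r : ℝ) :
    e * (r • A - B) * e' = r • (e * A * e') - e * B * e' := by
  rw [Matrix.mul_sub, Matrix.sub_mul, Matrix.mul_smul, Matrix.smul_mul]

end LyapAux

open LyapAux in
/-- For Hurwitz `α` and real symmetric positive definite `β`,
`𝐋(α, 𝐋(α, β)) ⪯ 𝐫(𝐋(α, β) β⁻¹) · 𝐋(α, β)` in the Loewner order. -/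
theorem lyap_iterate_bound {n : ℕ} (α β : Matrix (Fin n) (Fin n) ℝ)
    (hα : Hurwitz α) (hβ : β.PosDef) :
    (specRad (lyap α β * β⁻¹) • lyap α β - lyap α (lyap α β)).PosSemidef := by
  set f : ℝ → Matrix (Fin n) (Fin n) ℝ :=
    fun t => NormedSpace.exp (t • α) * β * NormedSpace.exp (t • αᵀ) with hfdef
  have hlyap0 : lyap α 0 = 0 := by
    simp [lyap]
  by_cases hf : Integrable f (volume.restrict (Set.Ioi (0:ℝ)))
  · -- the genuine case
    set γ : Matrix (Fin n) (Fin n) ℝ := lyap α β with hγdef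
    have hγ : γ.PosSemidef :=
      posSemidef_integral hf fun t => conj_posSemidef hβ.posSemidef α t
    set r : ℝ := specRad (γ * β⁻¹) with hrdef
    have hkey : (r • β - γ).PosSemidef := loewner_le_specRad_smul hβ hγ
    set g : ℝ → Matrix (Fin n) (Fin n) ℝ :=
      fun t => NormedSpace.exp (t • α) * γ * NormedSpace.exp (t • αᵀ) with hgdef
    have hsub : ∀ t : ℝ, r • f t - g t
        = NormedSpace.exp (t • α) * (r • β - γ) * NormedSpace.exp (t • αᵀ) := by
      intro t
      rw [conj_sub_smul]
    have hsubps : ∀ t : ℝ, (r • f t - g t).PosSemidef := by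
      intro t
      rw [hsub t]
      exact conj_posSemidef hkey α t
    have hgps : ∀ t : ℝ, (g t).PosSemidef := fun t => conj_posSemidef hγ α t
    have hgcont : Continuous g :=
      ((exp_smul_continuous α).matrix_mul continuous_const).matrix_mul
        (exp_smul_continuous αᵀ)
    have hg : Integrable g (volume.restrict (Set.Ioi (0:ℝ))) := by
      refine ((hf.smul r).mono hgcont.aestronglyMeasurable (ae_of_all _ fun t => ?_))
      have h1 : ‖g t‖ ≤ ‖r • f t‖ := by
        refine norm_le_of_posSemidef_sub (hgps t) ?_
        exact hsubps t
      simpa using h1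
    have hlg : lyap α γ = ∫ t in Set.Ioi (0:ℝ), g t := rfl
    have hsmul : r • γ = ∫ t in Set.Ioi (0:ℝ), r • f t := by
      rw [hγdef]
      exact (integral_smul r f).symm
    have hF : Integrable (fun t => r • f t) (volume.restrict (Set.Ioi (0:ℝ))) := hf.smul r
    rw [hlg, hsmul, ← integral_sub hF hg]
    exact posSemidef_integral (hF.sub hg) hsubps
  · -- junk case: the integral is zero
    have h0 : lyap α β = 0 := integral_undef hf
    rw [h0, hlyap0, smul_zero, sub_zero]
    exact Matrix.PosSemidef.zero
end

section
/- Let A be a real n×n matrix which is diagonalizable as A = iVΩW, where V ∈ ℂ^{n×n} is invertible, W := V^{-1}, and Ω = diag(ω₁, …, ω_n) with real ω₁, …, ω_n. Let Γ ∈ ℂ^{n×n} and τ > 0. Then (1/τ) ∫₀^{+∞} e^{-t/τ} e^{tA} Γ e^{tAᵀ} dt = V (Φ_τ ⊙ (W Γ W*)) V*, where Φ_τ := (χ_τ(ω_j − ω_k))_{1≤j,k≤n} with χ_τ(u) := 1/(1 − iuτ), ⊙ denotes the Hadamard (entrywise) product, and (·)* denotes the complex conjugate transpose. -/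
open Matrix MeasureTheory

attribute [local instance] Matrix.normedAddCommGroup Matrix.normedSpace

section AuxCexp
open Set Filter

lemma integrableOn_cexp_Ioi_zero {c : ℂ} (hc : c.re < 0) :
    IntegrableOn (fun t : ℝ => Complex.exp (c * t)) (Set.Ioi 0) := by
  refine (integrable_norm_iff ?_).mp ?_
  · exact (Complex.continuous_exp.comp (by continuity)).aestronglyMeasurable
  · have : IntegrableOn (fun t : ℝ => Real.exp (-(-c.re) * t)) (Set.Ioi 0) :=
      exp_neg_integrableOn_Ioi 0 (by linarith)
    refine this.congr_fun (fun t _ => ?_) measurableSet_Ioi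
    simp [Complex.norm_exp]

lemma integral_cexp_Ioi_zero {c : ℂ} (hc : c.re < 0) :
    (∫ t in Set.Ioi (0:ℝ), Complex.exp (c * t)) = -c⁻¹ := by
  have hc0 : c ≠ 0 := fun h => by simp [h] at hc
  have hderiv : ∀ x ∈ Set.Ioi (0:ℝ),
      HasDerivAt (fun t : ℝ => Complex.exp (c * t) / c) (Complex.exp (c * x)) x := by
    intro x _
    have h1 : HasDerivAt (fun t : ℝ => c * (t : ℂ)) c x := by
      simpa using (Complex.ofRealCLM.hasDerivAt (x := x)).const_mul c
    have := (h1.cexp).div_const c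
    simpa [mul_div_assoc, mul_div_cancel_left₀ _ hc0, mul_comm] using this
  have htend : Tendsto (fun t : ℝ => Complex.exp (c * t) / c) atTop (nhds 0) := by
    rw [tendsto_zero_iff_norm_tendsto_zero]
    have : Tendsto (fun t : ℝ => Real.exp (c.re * t) / ‖c‖) atTop (nhds 0) := by
      have h1 : Tendsto (fun t : ℝ => c.re * t) atTop atBot :=
        Tendsto.const_mul_atTop_of_neg hc tendsto_id
      simpa using (Real.tendsto_exp_atBot.comp h1).div_const ‖c‖
    refine this.congr fun t => ?_
    simp [Complex.norm_exp]
  have := integral_Ioi_of_hasDerivAt_of_tendsto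
    (f := fun t : ℝ => Complex.exp (c * t) / c) (a := (0:ℝ))
    (((Complex.continuous_exp.comp (by continuity)).div_const c).continuousWithinAt)
    hderiv (integrableOn_cexp_Ioi_zero hc) htend
  rw [this]
  simp [neg_div, div_eq_inv_mul]

end AuxCexp

/-- If the real matrix `A` is diagonalized as `A = iVΩW` with `W = V⁻¹`
and real frequencies `ω₁, …, ω_n`, then for any complex `Γ` and `τ > 0`,
`(1/τ)∫₀^∞ e^{-t/τ} e^{tA} Γ e^{tAᵀ} dt = V (Φ_τ ⊙ (WΓW*)) V*`, where
`Φ_τ = (χ_τ(ω_j − ω_k))` with `χ_τ(u) = 1/(1 − iuτ)` and `⊙` the Hadamard product. -/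
theorem discounted_second_moments_freq_domain {n : ℕ}
    (A : Matrix (Fin n) (Fin n) ℝ) (V W : Matrix (Fin n) (Fin n) ℂ)
    (hV : IsUnit V.det) (hW : W = V⁻¹) (ω : Fin n → ℝ)
    (hA : A.map (Complex.ofReal · : ℝ → ℂ)
      = Complex.I • (V * Matrix.diagonal (fun k => (ω k : ℂ)) * W))
    (Γ : Matrix (Fin n) (Fin n) ℂ) (τ : ℝ) (hτ : 0 < τ) :
    ((1 / τ) • ∫ t in Set.Ioi (0:ℝ), Real.exp (-t / τ) •
        ((NormedSpace.exp (t • A)).map (Complex.ofReal · : ℝ → ℂ) * Γ *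
          (NormedSpace.exp (t • Aᵀ)).map (Complex.ofReal · : ℝ → ℂ)))
      = V * (Matrix.hadamard
          (Matrix.of fun j k => 1 / (1 - Complex.I * ((ω j : ℂ) - (ω k : ℂ)) * (τ : ℂ)))
          (W * Γ * Wᴴ)) * Vᴴ := by
  classical
  have hτ0 : (τ : ℂ) ≠ 0 := Complex.ofReal_ne_zero.mpr hτ.ne'
  have hVu : IsUnit V := (Matrix.isUnit_iff_isUnit_det V).mpr hV
  set M : Matrix (Fin n) (Fin n) ℂ := W * Γ * Wᴴ with hM
  set c : Fin n → Fin n → ℂ :=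
    fun a b => (Complex.I * ((ω a : ℂ) - (ω b : ℂ)) * τ - 1) / τ with hc
  set C : Fin n → Fin n → Matrix (Fin n) (Fin n) ℂ :=
    fun a b => Matrix.of (fun j k => V j a * M a b * (starRingEnd ℂ) (V k b)) with hCdef
  have hcre : ∀ a b, (c a b).re < 0 := by
    intro a b
    have : c a b = Complex.I * ((ω a : ℂ) - (ω b : ℂ)) - 1/τ := by
      simp only [hc]
      field_simp
    rw [this]
    simp [Complex.div_re, Complex.one_re, Complex.one_im]
    positivity
  -- Step 1: exponential formula
  have hmapexp : ∀ (X : Matrix (Fin n) (Fin n) ℝ),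
      (NormedSpace.exp X).map (Complex.ofReal · : ℝ → ℂ)
        = NormedSpace.exp (X.map (Complex.ofReal · : ℝ → ℂ)) := by
    intro X
    letI : SeminormedRing (Matrix (Fin n) (Fin n) ℝ) := Matrix.linftyOpSemiNormedRing
    letI : NormedRing (Matrix (Fin n) (Fin n) ℝ) := Matrix.linftyOpNormedRing
    letI : NormedAlgebra ℝ (Matrix (Fin n) (Fin n) ℝ) := Matrix.linftyOpNormedAlgebra
    letI : NormedAlgebra ℚ (Matrix (Fin n) (Fin n) ℝ) := Matrix.linftyOpNormedAlgebra
    haveI : @CompleteSpace (Matrix (Fin n) (Fin n) ℝ)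
        (@PseudoMetricSpace.toUniformSpace _ (@SeminormedRing.toPseudoMetricSpace _ NormedRing.toSeminormedRing)) :=
      FiniteDimensional.complete ℝ _
    letI : SeminormedRing (Matrix (Fin n) (Fin n) ℂ) := Matrix.linftyOpSemiNormedRing
    letI : NormedRing (Matrix (Fin n) (Fin n) ℂ) := Matrix.linftyOpNormedRing
    letI : NormedAlgebra ℝ (Matrix (Fin n) (Fin n) ℂ) := Matrix.linftyOpNormedAlgebra
    have hcont : Continuous (Complex.ofRealHom.mapMatrix :
        Matrix (Fin n) (Fin n) ℝ →+* Matrix (Fin n) (Fin n) ℂ) :=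
      continuous_id.matrix_map Complex.continuous_ofReal
    have h := NormedSpace.map_exp (Complex.ofRealHom.mapMatrix :
        Matrix (Fin n) (Fin n) ℝ →+* Matrix (Fin n) (Fin n) ℂ) hcont X
    simp only [RingHom.mapMatrix_apply] at h
    exact h
  have hexpA : ∀ t : ℝ, (NormedSpace.exp (t • A)).map (Complex.ofReal · : ℝ → ℂ)
      = V * Matrix.diagonal (fun k => Complex.exp (Complex.I * (ω k : ℂ) * t)) * W := by
    intro t
    rw [hmapexp]
    have hsm : (t • A).map (Complex.ofReal · : ℝ → ℂ)
        = V * Matrix.diagonal (fun k => Complex.I * (ω k : ℂ) * t) * W := by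
      have h1 : (t • A).map (Complex.ofReal · : ℝ → ℂ)
          = (t : ℂ) • A.map (Complex.ofReal · : ℝ → ℂ) := by
        ext i j; simp [Matrix.map_apply]
      rw [h1, hA]
      ext i j
      simp only [Matrix.smul_apply, Matrix.mul_apply, Matrix.diagonal_apply, ite_mul,
        mul_ite, zero_mul, mul_zero, Finset.sum_ite_eq, Finset.sum_ite_eq',
        Finset.mem_univ, if_true, smul_eq_mul, Finset.mul_sum, Complex.real_smul]
      refine Finset.sum_congr rfl fun b _ => ?_
      ring
    rw [hsm, hW, Matrix.exp_conj V _ hVu, Matrix.exp_diagonal, Pi.exp_def]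
    congr 2
    funext k
    rw [← Complex.exp_eq_exp_ℂ]
  have hexpAT : ∀ t : ℝ, (NormedSpace.exp (t • Aᵀ)).map (Complex.ofReal · : ℝ → ℂ)
      = Wᴴ * Matrix.diagonal (fun k => Complex.exp (-(Complex.I * (ω k : ℂ) * t))) * Vᴴ := by
    intro t
    have h2 : (NormedSpace.exp (t • Aᵀ)).map (Complex.ofReal · : ℝ → ℂ)
        = ((NormedSpace.exp (t • A)).map (Complex.ofReal · : ℝ → ℂ))ᴴ := by
      rw [← Matrix.transpose_smul, Matrix.exp_transpose]
      ext i j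
      simp [Matrix.map_apply, Matrix.conjTranspose_apply]
    have hstar : (star fun k : Fin n => Complex.exp (Complex.I * (ω k : ℂ) * t))
        = fun k : Fin n => Complex.exp (-(Complex.I * (ω k : ℂ) * t)) := by
      funext k
      rw [Pi.star_apply]
      rw [show star (Complex.exp (Complex.I * (ω k : ℂ) * t)) =
          (starRingEnd ℂ) (Complex.exp (Complex.I * (ω k : ℂ) * t)) from rfl,
        ← Complex.exp_conj]
      congr 1
      simp only [_root_.map_mul, Complex.conj_I, Complex.conj_ofReal]
      ring
    rw [h2, hexpA t, Matrix.conjTranspose_mul, Matrix.conjTranspose_mul,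
      Matrix.diagonal_conjTranspose, hstar, ← Matrix.mul_assoc]
  -- general expansion of V * X * Vᴴ
  have hsum : ∀ X : Matrix (Fin n) (Fin n) ℂ, V * X * Vᴴ
      = ∑ a : Fin n, ∑ b : Fin n,
          Matrix.of (fun j k => V j a * X a b * (starRingEnd ℂ) (V k b)) := by
    intro X
    ext j k
    simp only [Matrix.mul_apply, Matrix.conjTranspose_apply, Matrix.sum_apply,
      Matrix.of_apply, Finset.sum_mul]
    rw [Finset.sum_comm]
    refine Finset.sum_congr rfl fun a _ => Finset.sum_congr rfl fun b _ => ?_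
    rw [Complex.star_def]
  -- the key pointwise identity
  have key : ∀ t : ℝ, Real.exp (-t / τ) •
        ((NormedSpace.exp (t • A)).map (Complex.ofReal · : ℝ → ℂ) * Γ *
          (NormedSpace.exp (t • Aᵀ)).map (Complex.ofReal · : ℝ → ℂ))
      = ∑ a : Fin n, ∑ b : Fin n, Complex.exp (c a b * t) • C a b := by
    intro t
    rw [hexpA t, hexpAT t]
    have hmat : V * Matrix.diagonal (fun k => Complex.exp (Complex.I * (ω k : ℂ) * t)) * W * Γ *
          (Wᴴ * Matrix.diagonal (fun k => Complex.exp (-(Complex.I * (ω k : ℂ) * t))) * Vᴴ)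
        = V * (Matrix.diagonal (fun k => Complex.exp (Complex.I * (ω k : ℂ) * t)) * M *
            Matrix.diagonal (fun k => Complex.exp (-(Complex.I * (ω k : ℂ) * t)))) * Vᴴ := by
      rw [hM]
      simp only [Matrix.mul_assoc]
    rw [hmat, hsum]
    rw [Finset.smul_sum]
    refine Finset.sum_congr rfl fun a _ => ?_
    rw [Finset.smul_sum]
    refine Finset.sum_congr rfl fun b _ => ?_
    have hcexp : Complex.exp (c a b * t)
        = (Real.exp (-t / τ) : ℂ) * (Complex.exp (Complex.I * (ω a : ℂ) * t) *
            Complex.exp (-(Complex.I * (ω b : ℂ) * t))) := by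
      rw [Complex.ofReal_exp, ← Complex.exp_add, ← Complex.exp_add]
      congr 1
      rw [hc]
      push_cast
      field_simp
      ring
    ext j k
    simp only [Matrix.smul_apply, Matrix.of_apply, hCdef, Matrix.diagonal_mul,
      Matrix.mul_diagonal, smul_eq_mul, Complex.real_smul, hcexp]
    ring
  -- integrability of each term
  letI : ContinuousENorm (Matrix (Fin n) (Fin n) ℂ) := SeminormedAddGroup.toContinuousENorm
  have hint : ∀ a b : Fin n,
      IntegrableOn (fun t : ℝ => Complex.exp (c a b * t) • C a b) (Set.Ioi 0) volume :=
    fun a b => (integrableOn_cexp_Ioi_zero (hcre a b)).smul_const _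
  -- rewrite the integral
  have hI : (∫ t in Set.Ioi (0:ℝ), Real.exp (-t / τ) •
        ((NormedSpace.exp (t • A)).map (Complex.ofReal · : ℝ → ℂ) * Γ *
          (NormedSpace.exp (t • Aᵀ)).map (Complex.ofReal · : ℝ → ℂ)))
      = ∑ a : Fin n, ∑ b : Fin n, (-(c a b)⁻¹) • C a b := by
    rw [integral_congr_ae (Filter.Eventually.of_forall fun t => key t)]
    rw [integral_finset_sum _ (fun a _ => integrable_finset_sum _ fun b _ => by exact hint a b)]
    refine Finset.sum_congr rfl fun a _ => ?_
    rw [integral_finset_sum _ (fun b _ => by exact hint a b)]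
    refine Finset.sum_congr rfl fun b _ => ?_
    rw [integral_smul_const, integral_cexp_Ioi_zero (hcre a b)]
  rw [hI, hsum]
  rw [Finset.smul_sum]
  refine Finset.sum_congr rfl fun a _ => ?_
  rw [Finset.smul_sum]
  refine Finset.sum_congr rfl fun b _ => ?_
  have hne : (1 : ℂ) - Complex.I * ((ω a : ℂ) - (ω b : ℂ)) * (τ : ℂ) ≠ 0 := by
    intro h
    have hre := congrArg Complex.re h
    simp only [Complex.sub_re, Complex.one_re, Complex.mul_re, Complex.mul_im,
      Complex.I_re, Complex.I_im, Complex.ofReal_re, Complex.ofReal_im,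
      Complex.sub_im, Complex.zero_re] at hre
    simp at hre
  have hcab : c a b = (Complex.I * ((ω a : ℂ) - (ω b : ℂ)) * τ - 1) / τ := by rw [hc]
  have hscal : ((1 / τ : ℝ) : ℂ) * (-(c a b)⁻¹)
      = 1 / (1 - Complex.I * ((ω a : ℂ) - (ω b : ℂ)) * τ) := by
    rw [hcab, inv_div, ← div_neg, neg_sub]
    push_cast
    field_simp [hne]
  ext j k
  simp only [Matrix.smul_apply, hCdef, Matrix.of_apply, Matrix.hadamard_apply,
    smul_eq_mul, Complex.real_smul]
  rw [← mul_assoc, hscal]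
  ring
end

section
/- Let A be a real n×n matrix diagonalizable as A = iVΩW, where V ∈ ℂ^{n×n} is invertible, W := V^{-1}, and Ω = diag(ω₁, …, ω_n) with real ω₁, …, ω_n. Let Γ ∈ ℂ^{n×n}. Then lim_{τ→+∞} (1/τ) ∫₀^{+∞} e^{-t/τ} e^{tA} Γ e^{tAᵀ} dt = V (Φ_∞ ⊙ (W Γ W*)) V*, where Φ_∞ := (δ_{ω_j ω_k})_{1≤j,k≤n} is the binary matrix with (j,k) entry equal to 1 if ω_j = ω_k and 0 otherwise, and ⊙ is the Hadamard product. In particular, if ω₁, …, ω_n are pairwise distinct, then Φ_∞ = Iₙ and the limit equals V (diag entries of W Γ W*) V* = Σ_{k=1}^n V_k W_k Γ W_k* V_k*, where V_k is the k-th column of V and W_k the k-th row of W. -/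
open Matrix MeasureTheory

attribute [local instance] Matrix.normedAddCommGroup Matrix.normedSpace

open Filter

lemma aux_cexp_integrable {c : ℂ} (hc : 0 < c.re) :
    IntegrableOn (fun t : ℝ => Complex.exp (-(c * t))) (Set.Ioi 0) := by
  have hre : ∀ t : ℝ, (-(c * (t:ℂ))).re = -(c.re * t) := fun t => by
    simp [Complex.mul_re]
  have hcont : Continuous fun t : ℝ => Complex.exp (-(c * t)) :=
    Complex.continuous_exp.comp ((continuous_const.mul Complex.continuous_ofReal).neg)
  refine Integrable.mono' (exp_neg_integrableOn_Ioi 0 hc) hcont.aestronglyMeasurable ?_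
  filter_upwards with t
  rw [Complex.norm_exp, hre t]
  simp [neg_mul]

lemma aux_cexp_integral {c : ℂ} (hc : 0 < c.re) :
    ∫ t in Set.Ioi (0:ℝ), Complex.exp (-(c * t)) = 1 / c := by
  have hc0 : c ≠ 0 := fun h => by simp [h] at hc
  have hre : ∀ t : ℝ, (-(c * (t:ℂ))).re = -(c.re * t) := fun t => by
    simp [Complex.mul_re]
  have hderiv : ∀ x ∈ Set.Ici (0:ℝ),
      HasDerivAt (fun t : ℝ => -c⁻¹ * Complex.exp (-(c * t))) (Complex.exp (-(c * x))) x := by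
    intro x _
    have h1 : HasDerivAt (fun t : ℝ => ((t : ℝ) : ℂ)) 1 x := by
      simpa using (hasDerivAt_id x).ofReal_comp
    have h2 : HasDerivAt (fun t : ℝ => -(c * (t:ℂ))) (-c) x := by
      have := (h1.const_mul c).neg; simp only [mul_one] at this; exact this
    have h4 := h2.cexp.const_mul (-c⁻¹)
    refine h4.congr_deriv ?_
    rw [mul_neg, neg_mul_neg, mul_comm (Complex.exp _) c, ← mul_assoc, inv_mul_cancel₀ hc0, one_mul]
  have htend0 : Tendsto (fun t : ℝ => Complex.exp (-(c * t))) atTop (nhds 0) := by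
    rw [tendsto_zero_iff_norm_tendsto_zero]
    have heq : ∀ t : ℝ, ‖Complex.exp (-(c * t))‖ = Real.exp (-(c.re * t)) := fun t => by
      rw [Complex.norm_exp, hre t]
    simp_rw [heq]
    exact Real.tendsto_exp_neg_atTop_nhds_zero.comp
      (Tendsto.const_mul_atTop hc tendsto_id)
  have htend : Tendsto (fun t : ℝ => -c⁻¹ * Complex.exp (-(c * t))) atTop (nhds 0) := by
    simpa using htend0.const_mul (-c⁻¹)
  rw [integral_Ioi_of_hasDerivAt_of_tendsto' hderiv (aux_cexp_integrable hc) htend]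
  simp [one_div]

lemma aux_tendsto (μ : ℝ) (z : ℂ) :
    Tendsto (fun τ : ℝ => z / (1 - ↑μ * ↑τ * Complex.I)) atTop
      (nhds (if μ = 0 then z else 0)) := by
  rcases eq_or_ne μ 0 with h | h
  · subst h
    simp only [Complex.ofReal_zero, zero_mul, sub_zero, div_one]
    exact tendsto_const_nhds
  · simp only [if_neg h]
    rw [tendsto_zero_iff_norm_tendsto_zero]
    simp_rw [norm_div]
    refine Tendsto.div_atTop tendsto_const_nhds ?_
    refine tendsto_atTop_mono' _ ?_ (Tendsto.const_mul_atTop (abs_pos.2 h) tendsto_id)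
    filter_upwards [eventually_ge_atTop (0:ℝ)] with τ hτ
    have h1 : |(1 - ↑μ * ↑τ * Complex.I).im| ≤ ‖(1 - ↑μ * ↑τ * Complex.I)‖ := by
      exact Complex.abs_im_le_norm _
    have h2 : (1 - ↑μ * ↑τ * Complex.I).im = -(μ * τ) := by simp
    calc |μ| * id τ = |(1 - ↑μ * ↑τ * Complex.I).im| := by
          rw [h2, abs_neg, abs_mul, abs_of_nonneg hτ]; rfl
      _ ≤ _ := h1


/-- If the real matrix `A` is diagonalized as `A = iVΩW` with `W = V⁻¹`
and real frequencies `ω₁, …, ω_n`, then for any complex `Γ`, the discounted averages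
`(1/τ)∫₀^∞ e^{-t/τ} e^{tA} Γ e^{tAᵀ} dt` converge, as `τ → +∞`, to
`V (Φ_∞ ⊙ (WΓW*)) V*`, where `Φ_∞ = (δ_{ω_j ω_k})`. In particular, if the frequencies are
pairwise distinct, then `Φ_∞ = I` and the limit equals `Σ_k V_k (WΓW*)_{kk} V_k*`. -/
theorem infinite_horizon_second_moments {n : ℕ}
    (A : Matrix (Fin n) (Fin n) ℝ) (V W : Matrix (Fin n) (Fin n) ℂ)
    (hV : IsUnit V.det) (hW : W = V⁻¹) (ω : Fin n → ℝ)
    (hA : A.map (Complex.ofReal · : ℝ → ℂ)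
      = Complex.I • (V * Matrix.diagonal (fun k => (ω k : ℂ)) * W))
    (Γ : Matrix (Fin n) (Fin n) ℂ) :
    Filter.Tendsto
      (fun τ : ℝ => (1 / τ) • ∫ t in Set.Ioi (0:ℝ), Real.exp (-t / τ) •
        ((NormedSpace.exp (t • A)).map (Complex.ofReal · : ℝ → ℂ) * Γ *
          (NormedSpace.exp (t • Aᵀ)).map (Complex.ofReal · : ℝ → ℂ)))
      Filter.atTop
      (nhds (V * (Matrix.hadamard
          (Matrix.of fun j k => if ω j = ω k then (1 : ℂ) else 0)
          (W * Γ * Wᴴ)) * Vᴴ))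
    ∧ (Function.Injective ω →
        (Matrix.of fun j k => if ω j = ω k then (1 : ℂ) else 0)
          = (1 : Matrix (Fin n) (Fin n) ℂ) ∧
        V * (Matrix.hadamard
            (Matrix.of fun j k => if ω j = ω k then (1 : ℂ) else 0)
            (W * Γ * Wᴴ)) * Vᴴ
          = ∑ k : Fin n, Matrix.of fun i j =>
              V i k * (W * Γ * Wᴴ) k k * star (V j k)) := by
  subst hW
  have hUnit : IsUnit V := (Matrix.isUnit_iff_isUnit_det V).2 hV
  set M : Matrix (Fin n) (Fin n) ℂ := V⁻¹ * Γ * V⁻¹ᴴ with hMdef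
  -- decomposition of conjugated matrices into sums of std basis matrices
  have hsum : ∀ f : Fin n → Fin n → ℂ,
      V * (Matrix.of f) * Vᴴ
        = ∑ j : Fin n, ∑ k : Fin n, f j k • (V * Matrix.single j k (1:ℂ) * Vᴴ) := by
    intro f
    conv_lhs => rw [matrix_eq_sum_single (Matrix.of f)]
    simp only [Finset.mul_sum, Finset.sum_mul]
    refine Finset.sum_congr rfl fun j _ => Finset.sum_congr rfl fun k _ => ?_
    rw [show Matrix.single j k ((Matrix.of f) j k)
        = f j k • Matrix.single j k (1:ℂ) from by
      rw [smul_single, smul_eq_mul, mul_one]; rfl]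
    rw [mul_smul_comm, smul_mul_assoc]
  constructor
  · -- the analytic part
    -- exponentials
    have hE : ∀ t : ℝ, (NormedSpace.exp (t • A)).map (Complex.ofReal · : ℝ → ℂ)
        = V * Matrix.diagonal (fun k => Complex.exp (((t * ω k : ℝ) : ℂ) * Complex.I)) * V⁻¹ := by
      intro t
      letI : SeminormedRing (Matrix (Fin n) (Fin n) ℝ) := Matrix.linftyOpSemiNormedRing
      letI : NormedRing (Matrix (Fin n) (Fin n) ℝ) := Matrix.linftyOpNormedRing
      letI : NormedAlgebra ℝ (Matrix (Fin n) (Fin n) ℝ) := Matrix.linftyOpNormedAlgebra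
      letI : SeminormedRing (Matrix (Fin n) (Fin n) ℂ) := Matrix.linftyOpSemiNormedRing
      letI : NormedRing (Matrix (Fin n) (Fin n) ℂ) := Matrix.linftyOpNormedRing
      letI : NormedAlgebra ℝ (Matrix (Fin n) (Fin n) ℂ) := Matrix.linftyOpNormedAlgebra
      letI : NormedAlgebra ℚ (Matrix (Fin n) (Fin n) ℝ) := Matrix.linftyOpNormedAlgebra
      haveI : @CompleteSpace (Matrix (Fin n) (Fin n) ℝ)
          (‹NormedRing (Matrix (Fin n) (Fin n) ℝ)›).toPseudoMetricSpace.toUniformSpace :=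
        FiniteDimensional.complete ℝ _
      have hcont : Continuous fun M : Matrix (Fin n) (Fin n) ℝ =>
          (Complex.ofRealHom.mapMatrix :
            Matrix (Fin n) (Fin n) ℝ →+* Matrix (Fin n) (Fin n) ℂ) M := by
        simp only [RingHom.mapMatrix_apply]
        exact continuous_matrix fun i j =>
          Complex.continuous_ofReal.comp ((continuous_apply j).comp (continuous_apply i))
      have hmap : (NormedSpace.exp (t • A)).map (Complex.ofReal · : ℝ → ℂ)
          = NormedSpace.exp ((t • A).map (Complex.ofReal · : ℝ → ℂ)) := by
        have := NormedSpace.map_exp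
            (Complex.ofRealHom.mapMatrix : Matrix (Fin n) (Fin n) ℝ →+* _) hcont (t • A)
        simp only [RingHom.mapMatrix_apply] at this
        exact this
      have hsmul : (t • A).map (Complex.ofReal · : ℝ → ℂ)
          = V * Matrix.diagonal (fun k => ((t : ℂ) * Complex.I) * (ω k : ℂ)) * V⁻¹ := by
        have h1 : (t • A).map (Complex.ofReal · : ℝ → ℂ)
            = (t : ℂ) • A.map (Complex.ofReal · : ℝ → ℂ) := by
          ext i j; simp [Matrix.map_apply]
        rw [h1, hA, smul_smul, ← smul_mul_assoc, ← mul_smul_comm, ← Matrix.diagonal_smul]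
        congr 1
      have hdiag : (NormedSpace.exp fun k => (t:ℂ) * Complex.I * (ω k:ℂ))
          = fun k => Complex.exp (((t * ω k : ℝ) : ℂ) * Complex.I) := by
        funext k
        rw [Pi.coe_exp, ← Complex.exp_eq_exp_ℂ]
        congr 1
        push_cast
        ring
      rw [hmap, hsmul, Matrix.exp_conj V _ hUnit, Matrix.exp_diagonal, hdiag]
    have hF : ∀ t : ℝ, (NormedSpace.exp (t • Aᵀ)).map (Complex.ofReal · : ℝ → ℂ)
        = (V⁻¹)ᴴ * Matrix.diagonal
            (fun k => Complex.exp (-(((t * ω k : ℝ) : ℂ) * Complex.I))) * Vᴴ := by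
      intro t
      have h1 : (NormedSpace.exp (t • Aᵀ)).map (Complex.ofReal · : ℝ → ℂ)
          = ((NormedSpace.exp (t • A)).map (Complex.ofReal · : ℝ → ℂ))ᵀ := by
        rw [← Matrix.transpose_smul, Matrix.exp_transpose, Matrix.transpose_map]
      have h2 : ((NormedSpace.exp (t • A)).map (Complex.ofReal · : ℝ → ℂ))ᵀ
          = ((NormedSpace.exp (t • A)).map (Complex.ofReal · : ℝ → ℂ))ᴴ := by
        ext i j
        simp [Matrix.conjTranspose_apply, Matrix.map_apply, Complex.conj_ofReal]
      rw [h1, h2, hE t, Matrix.conjTranspose_mul, Matrix.conjTranspose_mul,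
        Matrix.diagonal_conjTranspose, ← Matrix.mul_assoc]
      have hstar : (star fun k => Complex.exp (((t * ω k : ℝ) : ℂ) * Complex.I))
          = fun k => Complex.exp (-(((t * ω k : ℝ) : ℂ) * Complex.I)) := by
        funext k
        simp only [Pi.star_apply, Complex.star_def, ← Complex.exp_conj, _root_.map_mul,
          Complex.conj_ofReal, Complex.conj_I, mul_neg]
      rw [hstar]
    -- entrywise limits
    have hlim : Tendsto (fun τ : ℝ => ∑ j : Fin n, ∑ k : Fin n,
          (M j k / (1 - ↑(ω j - ω k) * ↑τ * Complex.I)) •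
            (V * Matrix.single j k (1:ℂ) * Vᴴ)) atTop
        (nhds (∑ j : Fin n, ∑ k : Fin n,
          (if ω j = ω k then M j k else 0) • (V * Matrix.single j k (1:ℂ) * Vᴴ))) := by
      refine tendsto_finset_sum _ fun j _ => tendsto_finset_sum _ fun k _ => ?_
      simpa [sub_eq_zero] using
        (aux_tendsto (ω j - ω k) (M j k)).smul_const (V * Matrix.single j k (1:ℂ) * Vᴴ)
    have htarget : V * (Matrix.hadamard
          (Matrix.of fun j k => if ω j = ω k then (1 : ℂ) else 0) M) * Vᴴ
        = ∑ j : Fin n, ∑ k : Fin n,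
            (if ω j = ω k then M j k else 0) • (V * Matrix.single j k (1:ℂ) * Vᴴ) := by
      have h : Matrix.hadamard (Matrix.of fun j k => if ω j = ω k then (1 : ℂ) else 0) M
          = Matrix.of fun j k => if ω j = ω k then M j k else 0 := by
        ext j k
        simp [Matrix.hadamard_apply, ite_mul]
      rw [h, hsum]
    rw [htarget]
    refine Tendsto.congr' ?_ hlim
    filter_upwards [eventually_gt_atTop (0:ℝ)] with τ hτ
    have hτ0 : τ ≠ 0 := ne_of_gt hτ
    have hτC : ((τ:ℝ) : ℂ) ≠ 0 := by exact_mod_cast hτ0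
    set c : Fin n → Fin n → ℂ := fun j k => ((1/τ : ℝ) : ℂ) - ↑(ω j - ω k) * Complex.I
      with hcdef
    have hcre : ∀ j k, 0 < (c j k).re := by
      intro j k
      simp [hcdef]
      positivity
    have hc0 : ∀ j k, c j k ≠ 0 := by
      intro j k h
      have := hcre j k
      rw [h] at this
      simp at this
    -- the scalar integrand
    set g : Fin n → Fin n → ℝ → ℂ := fun j k t =>
      ((Real.exp (-t/τ) : ℝ) : ℂ) * (Complex.exp (((t * ω j : ℝ) : ℂ) * Complex.I) * M j k *
        Complex.exp (-(((t * ω k : ℝ) : ℂ) * Complex.I))) with hgdef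
    have hg_eq : ∀ j k, g j k = fun t : ℝ => M j k * Complex.exp (-(c j k * (t:ℂ))) := by
      intro j k
      funext t
      rw [hgdef]
      simp only
      rw [Complex.ofReal_exp]
      rw [show Complex.exp (((-t/τ : ℝ)): ℂ) * (Complex.exp (((t * ω j : ℝ) : ℂ) * Complex.I)
          * M j k * Complex.exp (-(((t * ω k : ℝ) : ℂ) * Complex.I)))
        = M j k * (Complex.exp (((-t/τ : ℝ) : ℂ)) * Complex.exp (((t * ω j : ℝ) : ℂ) * Complex.I)
          * Complex.exp (-(((t * ω k : ℝ) : ℂ) * Complex.I))) from by push_cast; ring]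
      rw [← Complex.exp_add, ← Complex.exp_add]
      congr 2
      rw [hcdef]
      push_cast
      field_simp
      ring
    have hgint : ∀ j k, IntegrableOn (g j k) (Set.Ioi 0) := by
      intro j k
      rw [hg_eq j k]
      exact (aux_cexp_integrable (hcre j k)).const_mul _
    have hInt : ∀ j k, ∫ t in Set.Ioi (0:ℝ), g j k t = M j k * (1 / c j k) := by
      intro j k
      rw [hg_eq j k]
      rw [MeasureTheory.integral_const_mul, aux_cexp_integral (hcre j k)]
    -- pointwise identity for the integrand
    have hfun : ∀ t : ℝ, Real.exp (-t / τ) •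
        ((NormedSpace.exp (t • A)).map (Complex.ofReal · : ℝ → ℂ) * Γ *
          (NormedSpace.exp (t • Aᵀ)).map (Complex.ofReal · : ℝ → ℂ))
        = ∑ j : Fin n, ∑ k : Fin n, g j k t • (V * Matrix.single j k (1:ℂ) * Vᴴ) := by
      intro t
      rw [hE t, hF t]
      have hDMD : Matrix.diagonal (fun k => Complex.exp (((t * ω k : ℝ) : ℂ) * Complex.I)) *
            M * Matrix.diagonal (fun k => Complex.exp (-(((t * ω k : ℝ) : ℂ) * Complex.I)))
          = Matrix.of fun j k => Complex.exp (((t * ω j : ℝ) : ℂ) * Complex.I) * M j k *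
              Complex.exp (-(((t * ω k : ℝ) : ℂ) * Complex.I)) := by
        ext j k
        simp [Matrix.mul_diagonal, Matrix.diagonal_mul]
      have hassoc : (V * Matrix.diagonal (fun k => Complex.exp (((t * ω k : ℝ) : ℂ) * Complex.I))
            * V⁻¹) * Γ * ((V⁻¹)ᴴ * Matrix.diagonal
              (fun k => Complex.exp (-(((t * ω k : ℝ) : ℂ) * Complex.I))) * Vᴴ)
          = V * (Matrix.diagonal (fun k => Complex.exp (((t * ω k : ℝ) : ℂ) * Complex.I)) *
              M * Matrix.diagonal (fun k => Complex.exp (-(((t * ω k : ℝ) : ℂ) * Complex.I))))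
            * Vᴴ := by
        rw [hMdef]
        simp only [Matrix.mul_assoc]
      rw [hassoc, hDMD, hsum]
      rw [Finset.smul_sum]
      refine Finset.sum_congr rfl fun j _ => ?_
      rw [Finset.smul_sum]
      refine Finset.sum_congr rfl fun k _ => ?_
      rw [← smul_assoc]
      congr 1
    -- rewrite the integral
    have hfeq : (fun t : ℝ => Real.exp (-t / τ) •
        ((NormedSpace.exp (t • A)).map (Complex.ofReal · : ℝ → ℂ) * Γ *
          (NormedSpace.exp (t • Aᵀ)).map (Complex.ofReal · : ℝ → ℂ)))
        = fun t => ∑ j : Fin n, ∑ k : Fin n, g j k t • (V * Matrix.single j k (1:ℂ) * Vᴴ) :=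
      funext hfun
    show _ = (1 / τ) • ∫ t in Set.Ioi (0:ℝ), _
    rw [hfeq]
    rw [MeasureTheory.integral_finset_sum _ fun j _ =>
      integrable_finset_sum _ fun k _ => (hgint j k).smul_const _]
    rw [Finset.smul_sum]
    refine Finset.sum_congr rfl fun j _ => ?_
    rw [MeasureTheory.integral_finset_sum _ fun k _ => (hgint j k).smul_const _]
    rw [Finset.smul_sum]
    refine Finset.sum_congr rfl fun k _ => ?_
    rw [integral_smul_const, hInt j k, ← smul_assoc]
    congr 1
    rw [Complex.real_smul]
    have h1 : (1 : ℂ) - ↑(ω j - ω k) * ↑τ * Complex.I = ↑τ * c j k := by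
      rw [hcdef]
      push_cast
      field_simp
    rw [h1]
    push_cast
    field_simp
  · -- the algebraic part
    intro hω
    have hPhi : (Matrix.of fun j k => if ω j = ω k then (1 : ℂ) else 0)
        = (1 : Matrix (Fin n) (Fin n) ℂ) := by
      ext j k
      simp [Matrix.one_apply, hω.eq_iff]
    refine ⟨hPhi, ?_⟩
    ext i j
    simp only [Matrix.mul_apply, Matrix.hadamard_apply, Matrix.of_apply, Matrix.sum_apply,
      Matrix.conjTranspose_apply, hω.eq_iff, ite_mul, one_mul, zero_mul, mul_ite, mul_zero,
      mul_one]
    simp only [Finset.sum_ite_eq', Finset.mem_univ, if_true]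
end

section
/- Let Θ be an invertible real antisymmetric (n+ν)×(n+ν) matrix, 𝒜 := ΘR₀ with R₀ real symmetric (so 𝒜 is Hamiltonian), τ > 0, 𝒜_τ := 𝒜 − (1/(2τ))I, Σ a real symmetric matrix and 𝒞 a real matrix of compatible dimensions. For real symmetric 𝒫 and 𝒬, set P := 𝒫Θ^{-1} and Q := Θ𝒬. Then: (i) 𝒜_τ𝒫 + 𝒫𝒜_τᵀ + (1/τ)Σ = 0 holds if and only if [𝒜, P] = (1/τ)(P − ΣΘ^{-1}); and (ii) 𝒜_τᵀ𝒬 + 𝒬𝒜_τ + 𝒞ᵀ𝒞 = 0 holds if and only if [𝒜, Q] = Θ𝒞ᵀ𝒞 − (1/τ)Q, where [X, Y] := XY − YX is the matrix commutator. -/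
open Matrix

/-- (Lie-algebraic form of the Lyapunov equations, Lemma 5 of the paper.)
For a Hamiltonian matrix `𝒜 = ΘR₀` and `𝒜_τ := 𝒜 − (1/(2τ))I`, with `P := 𝒫Θ⁻¹` and
`Q := Θ𝒬`: (i) `𝒜_τ𝒫 + 𝒫𝒜_τᵀ + (1/τ)Σ = 0 ↔ [𝒜, P] = (1/τ)(P − ΣΘ⁻¹)`; and
(ii) `𝒜_τᵀ𝒬 + 𝒬𝒜_τ + 𝒞ᵀ𝒞 = 0 ↔ [𝒜, Q] = Θ𝒞ᵀ𝒞 − (1/τ)Q`. -/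
theorem lie_algebraic_ALEs {N q : ℕ}
    (Θ R₀ : Matrix (Fin N) (Fin N) ℝ)
    (hΘ : Θᵀ = -Θ) (hΘinv : IsUnit Θ.det) (hR₀ : R₀ᵀ = R₀)
    (calA : Matrix (Fin N) (Fin N) ℝ) (hcalA : calA = Θ * R₀)
    (τ : ℝ) (hτ : 0 < τ)
    (calAτ : Matrix (Fin N) (Fin N) ℝ) (hcalAτ : calAτ = calA - (1 / (2 * τ)) • 1)
    (Sig : Matrix (Fin N) (Fin N) ℝ) (hSig : Sigᵀ = Sig)
    (CC : Matrix (Fin q) (Fin N) ℝ)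
    (calP calQ : Matrix (Fin N) (Fin N) ℝ) (hcalP : calPᵀ = calP) (hcalQ : calQᵀ = calQ)
    (P Q : Matrix (Fin N) (Fin N) ℝ) (hP : P = calP * Θ⁻¹) (hQ : Q = Θ * calQ) :
    (calAτ * calP + calP * calAτᵀ + (1 / τ) • Sig = 0
      ↔ calA * P - P * calA = (1 / τ) • (P - Sig * Θ⁻¹))
    ∧ (calAτᵀ * calQ + calQ * calAτ + CCᵀ * CC = 0
      ↔ calA * Q - Q * calA = Θ * CCᵀ * CC - (1 / τ) • Q) := by
  have hτ' : τ ≠ 0 := ne_of_gt hτ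
  have hΘl : Θ⁻¹ * Θ = 1 := Matrix.nonsing_inv_mul Θ hΘinv
  have hΘr : Θ * Θ⁻¹ = 1 := Matrix.mul_nonsing_inv Θ hΘinv
  have hΘl' : ∀ X : Matrix (Fin N) (Fin N) ℝ, Θ⁻¹ * (Θ * X) = X := by
    intro X; rw [← Matrix.mul_assoc, hΘl, Matrix.one_mul]
  have hΘr' : ∀ X : Matrix (Fin N) (Fin N) ℝ, Θ * (Θ⁻¹ * X) = X := by
    intro X; rw [← Matrix.mul_assoc, hΘr, Matrix.one_mul]
  have hAT : calAᵀ = -(R₀ * Θ) := by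
    rw [hcalA, Matrix.transpose_mul, hR₀, hΘ, Matrix.mul_neg]
  have hATτ : calAτᵀ = -(R₀ * Θ) - (1 / (2 * τ)) • 1 := by
    rw [hcalAτ, Matrix.transpose_sub, hAT, Matrix.transpose_smul, Matrix.transpose_one]
  constructor
  · have key : (calAτ * calP + calP * calAτᵀ + (1 / τ) • Sig) * Θ⁻¹
        = (calA * P - P * calA) - (1 / τ) • (P - Sig * Θ⁻¹) := by
      rw [hATτ, hcalAτ, hP, hcalA]
      simp only [Matrix.sub_mul, Matrix.mul_sub, Matrix.add_mul, Matrix.smul_mul,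
        Matrix.mul_smul, Matrix.one_mul, Matrix.mul_one, Matrix.neg_mul, Matrix.mul_neg,
        Matrix.mul_assoc, hΘl', hΘr', hΘl, hΘr, smul_sub, smul_add, smul_neg]
      match_scalars <;> field_simp <;> (try ring) <;> (try tauto)
    constructor
    · intro h
      have := congrArg (· * Θ⁻¹) h
      simp only [Matrix.zero_mul] at this
      rw [key] at this
      exact sub_eq_zero.mp this
    · intro h
      have h0 : (calAτ * calP + calP * calAτᵀ + (1 / τ) • Sig) * Θ⁻¹ = 0 := by
        rw [key, h, sub_self]
      have := congrArg (· * Θ) h0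
      simpa [Matrix.mul_assoc, hΘl, Matrix.zero_mul] using this
  · have key : (-Θ) * (calAτᵀ * calQ + calQ * calAτ + CCᵀ * CC)
        = (calA * Q - Q * calA) - (Θ * CCᵀ * CC - (1 / τ) • Q) := by
      rw [hATτ, hcalAτ, hQ, hcalA]
      simp only [Matrix.sub_mul, Matrix.mul_sub, Matrix.add_mul, Matrix.mul_add,
        Matrix.smul_mul, Matrix.mul_smul, Matrix.one_mul, Matrix.mul_one,
        Matrix.neg_mul, Matrix.mul_neg, Matrix.mul_assoc, hΘl', hΘr', hΘl, hΘr,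
        smul_sub, smul_add, smul_neg, neg_neg]
      match_scalars <;> field_simp <;> (try ring) <;> (try tauto)
    constructor
    · intro h
      have := congrArg (fun X => (-Θ) * X) h
      simp only [Matrix.mul_zero] at this
      rw [key] at this
      exact sub_eq_zero.mp this
    · intro h
      have h0 : (-Θ) * (calAτᵀ * calQ + calQ * calAτ + CCᵀ * CC) = 0 := by
        rw [key, h, sub_self]
      have h1 : Θ * (calAτᵀ * calQ + calQ * calAτ + CCᵀ * CC) = 0 := by
        rw [Matrix.neg_mul] at h0
        exact neg_eq_zero.mp h0
      calc calAτᵀ * calQ + calQ * calAτ + CCᵀ * CC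
          = Θ⁻¹ * (Θ * (calAτᵀ * calQ + calQ * calAτ + CCᵀ * CC)) := (hΘl' _).symm
        _ = 0 := by rw [h1, Matrix.mul_zero]
end

section
/- Let 𝒜 be a real N×N matrix all of whose eigenvalues λ satisfy |Re λ| < 1/(2τ) for some τ > 0, and let Θ be an invertible real antisymmetric N×N matrix. Then the linear operator X ↦ X − τ(𝒜X − X𝒜) on ℝ^{N×N} is invertible, and the unique solution 𝒫 of the algebraic Lyapunov equation 𝒜_τ𝒫 + 𝒫𝒜_τᵀ + (1/τ)Σ = 0 with 𝒜_τ := 𝒜 − (1/(2τ))I, where 𝒜 is Hamiltonian with respect to Θ (Θ^{-1}𝒜 symmetric) and Σ is real symmetric, satisfies 𝒫Θ^{-1} = (ℐ − τ ad_𝒜)^{-1}(ΣΘ^{-1}), where ad_𝒜(X) := [𝒜, X] = 𝒜X − X𝒜 and ℐ is the identity operator on matrices. Similarly, the unique solution 𝒬 of 𝒜_τᵀ𝒬 + 𝒬𝒜_τ + 𝒞ᵀ𝒞 = 0 satisfies Θ𝒬 = τ(ℐ + τ ad_𝒜)^{-1}(Θ𝒞ᵀ𝒞). -/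
open Matrix Polynomial

lemma charpoly_eval {n : ℕ} {K : Type*} [Field K] (M : Matrix (Fin n) (Fin n) K) (μ : K) :
    M.charpoly.eval μ = (Matrix.scalar (Fin n) μ - M).det := by
  rw [Matrix.charpoly, eval_det, matPolyEquiv_charmatrix]
  simp

lemma mem_spectrum_iff_det {n : ℕ} {K : Type*} [Field K] (M : Matrix (Fin n) (Fin n) K) (μ : K) :
    μ ∈ spectrum K M ↔ M.charpoly.eval μ = 0 := by
  rw [spectrum.mem_iff, charpoly_eval, Matrix.isUnit_iff_isUnit_det, isUnit_iff_ne_zero, not_not]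
  rfl

lemma my_pow_mul_comm {n : ℕ} (B D X : Matrix (Fin n) (Fin n) ℂ)
    (h : B * X = X * D) : ∀ k : ℕ, B ^ k * X = X * D ^ k := by
  intro k
  induction k with
  | zero => simp
  | succ k ih =>
    rw [pow_succ, pow_succ, mul_assoc, h, ← mul_assoc, ih, mul_assoc]

lemma aeval_mul_comm' {n : ℕ} (B D X : Matrix (Fin n) (Fin n) ℂ)
    (h : B * X = X * D) (p : ℂ[X]) :
    (aeval B p) * X = X * (aeval D p) := by
  induction p using Polynomial.induction_on' with
  | add p q hp hq => simp [map_add, add_mul, mul_add, hp, hq]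
  | monomial k a =>
    simp only [aeval_monomial]
    rw [mul_assoc, my_pow_mul_comm B D X h k, ← mul_assoc, ← mul_assoc,
      Algebra.commutes, mul_assoc]

lemma sylvester_inj_c {n : ℕ} (B D : Matrix (Fin n) (Fin n) ℂ)
    (hdisj : ∀ β ∈ spectrum ℂ B, β ∉ spectrum ℂ D)
    (X : Matrix (Fin n) (Fin n) ℂ) (h : B * X = X * D) : X = 0 := by
  rcases Nat.eq_zero_or_pos n with hn | hn
  · subst hn; ext i; exact absurd i.2 (by omega)
  have h1 := aeval_mul_comm' B D X h D.charpoly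
  rw [Matrix.aeval_self_charpoly, mul_zero] at h1
  have hunit : IsUnit (aeval B D.charpoly) := by
    rw [← spectrum.zero_notMem_iff ℂ]
    rw [spectrum.map_polynomial_aeval_of_degree_pos B D.charpoly
      (by rw [Matrix.charpoly_degree_eq_dim]; simpa using hn)]
    rintro ⟨β, hβ, hβ0⟩
    exact hdisj β hβ ((mem_spectrum_iff_det D β).2 hβ0)
  obtain ⟨u, hu⟩ := hunit
  calc X = (↑u⁻¹ * u) * X := by rw [u.inv_mul, one_mul]
  _ = 0 := by rw [mul_assoc, hu, h1, mul_zero]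

noncomputable def cpl {n : ℕ} (M : Matrix (Fin n) (Fin n) ℝ) : Matrix (Fin n) (Fin n) ℂ :=
  M.map (Complex.ofReal ·)

lemma cpl_mul {n : ℕ} (M N : Matrix (Fin n) (Fin n) ℝ) : cpl (M * N) = cpl M * cpl N := by
  ext i j; simp [cpl, Matrix.mul_apply]

lemma cpl_one {n : ℕ} : cpl (1 : Matrix (Fin n) (Fin n) ℝ) = 1 := by
  ext i j; simp [cpl, Matrix.one_apply, apply_ite]

lemma cpl_add {n : ℕ} (M N : Matrix (Fin n) (Fin n) ℝ) : cpl (M + N) = cpl M + cpl N := by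
  ext i j; simp [cpl]

lemma cpl_neg {n : ℕ} (M : Matrix (Fin n) (Fin n) ℝ) : cpl (-M) = -(cpl M) := by
  ext i j; simp [cpl]

lemma cpl_sub {n : ℕ} (M N : Matrix (Fin n) (Fin n) ℝ) : cpl (M - N) = cpl M - cpl N := by
  ext i j; simp [cpl]

lemma cpl_smul {n : ℕ} (r : ℝ) (M : Matrix (Fin n) (Fin n) ℝ) :
    cpl (r • M) = (r : ℂ) • cpl M := by
  ext i j; simp [cpl]

lemma cpl_transpose {n : ℕ} (M : Matrix (Fin n) (Fin n) ℝ) : cpl (Mᵀ) = (cpl M)ᵀ := by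
  ext i j; simp [cpl]

lemma cpl_eq_zero {n : ℕ} {M : Matrix (Fin n) (Fin n) ℝ} (h : cpl M = 0) : M = 0 := by
  ext i j
  have := congrFun (congrFun h i) j
  simpa [cpl] using this

lemma spectrum_transpose {n : ℕ} (M : Matrix (Fin n) (Fin n) ℂ) :
    spectrum ℂ Mᵀ = spectrum ℂ M := by
  ext μ
  simp only [spectrum.mem_iff, Matrix.isUnit_iff_isUnit_det]
  have h : (algebraMap ℂ (Matrix (Fin n) (Fin n) ℂ) μ) - Mᵀ
      = ((algebraMap ℂ (Matrix (Fin n) (Fin n) ℂ) μ) - M)ᵀ := by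
    rw [Matrix.transpose_sub]
    congr 1
    show _ = (Matrix.scalar (Fin n) μ)ᵀ
    rw [Matrix.scalar_apply, Matrix.diagonal_transpose]
    rfl
  rw [h, Matrix.det_transpose]

lemma spec_affine {n : ℕ} (A M : Matrix (Fin n) (Fin n) ℂ) (c d : ℂ) (hd : d ≠ 0)
    (hM : M = c • (1 : Matrix (Fin n) (Fin n) ℂ) + d • A) (μ : ℂ) :
    μ ∈ spectrum ℂ M ↔ ∃ z ∈ spectrum ℂ A, μ = c + d * z := by
  have h1 : c • (1 : Matrix (Fin n) (Fin n) ℂ) = algebraMap ℂ _ c := by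
    rw [Algebra.algebraMap_eq_smul_one]
  have h2 : (d • A : Matrix (Fin n) (Fin n) ℂ) = (Units.mk0 d hd) • A := rfl
  rw [hM, h1, ← spectrum.singleton_add_eq, h2,
    spectrum.unit_smul_eq_smul A (Units.mk0 d hd)]
  constructor
  · rintro ⟨x, hx, y, hy, hxy⟩
    rw [Set.mem_smul_set] at hy
    obtain ⟨z, hz, rfl⟩ := hy
    exact ⟨z, hz, by simp at hx; subst hx; simpa [Units.smul_def] using hxy.symm⟩
  · rintro ⟨z, hz, rfl⟩
    exact ⟨c, rfl, d * z, Set.smul_mem_smul_set hz, rfl⟩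

lemma sylvester_bij {n : ℕ} (B C : Matrix (Fin n) (Fin n) ℝ)
    (h : ∀ β ∈ spectrum ℂ (cpl B), ∀ γ ∈ spectrum ℂ (cpl C), β + γ ≠ 0) :
    Function.Bijective (fun X : Matrix (Fin n) (Fin n) ℝ => B * X + X * C) := by
  let L : Matrix (Fin n) (Fin n) ℝ →ₗ[ℝ] Matrix (Fin n) (Fin n) ℝ :=
    { toFun := fun X => B * X + X * C
      map_add' := fun X Y => by noncomm_ring
      map_smul' := fun r X => by
        simp [Matrix.mul_smul, Matrix.smul_mul, smul_add] }
  have hinj : Function.Injective L := by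
    rw [← LinearMap.ker_eq_bot, LinearMap.ker_eq_bot']
    intro X hX
    have hX' : B * X + X * C = 0 := hX
    have hBX : B * X = X * -C := by
      rw [Matrix.mul_neg, eq_neg_iff_add_eq_zero, hX']
    have hc : cpl B * cpl X = cpl X * -(cpl C) := by
      rw [← cpl_mul, ← cpl_neg, ← cpl_mul, hBX]
    have hz := sylvester_inj_c (cpl B) (-(cpl C)) ?_ (cpl X) hc
    · exact cpl_eq_zero hz
    · intro β hβ hβ'
      rw [← spectrum.neg_eq, Set.mem_neg] at hβ'
      exact h β hβ (-β) hβ' (by ring)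
  exact ⟨hinj, LinearMap.injective_iff_surjective.mp hinj⟩

lemma gap1 {τ z₁ z₂ : ℝ} (hτ : 0 < τ) (h1 : |z₁| < 1/(2*τ)) (h2 : |z₂| < 1/(2*τ)) :
    1 - τ*z₁ + τ*z₂ ≠ 0 := by
  rw [abs_lt] at h1 h2
  have hb : τ * (1/(2*τ)) = 1/2 := by field_simp
  nlinarith [mul_lt_mul_of_pos_left h1.2 hτ, mul_lt_mul_of_pos_left h2.1 hτ]

lemma gap2 {τ z₁ z₂ : ℝ} (hτ : 0 < τ) (h1 : |z₁| < 1/(2*τ)) (h2 : |z₂| < 1/(2*τ)) :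
    (z₁ - 1/(2*τ)) + (z₂ - 1/(2*τ)) ≠ 0 := by
  rw [abs_lt] at h1 h2
  have hb : τ * (1/(2*τ)) = 1/2 := by field_simp
  intro hc
  nlinarith [mul_lt_mul_of_pos_left h1.2 hτ, mul_lt_mul_of_pos_left h2.2 hτ,
    mul_eq_zero_of_right τ hc]


/-- (Resolvent representations of the Gramians.) If all eigenvalues `λ` of
`𝒜` satisfy `|Re λ| < 1/(2τ)`, the operators `X ↦ X ∓ τ[𝒜, X]` are invertible; for a
Hamiltonian `𝒜` (with respect to `Θ`), the unique solution `𝒫` of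
`𝒜_τ𝒫 + 𝒫𝒜_τᵀ + (1/τ)Σ = 0` satisfies `𝒫Θ⁻¹ = (ℐ − τ ad_𝒜)⁻¹(ΣΘ⁻¹)`, and the unique
solution `𝒬` of `𝒜_τᵀ𝒬 + 𝒬𝒜_τ + 𝒞ᵀ𝒞 = 0` satisfies `Θ𝒬 = τ(ℐ + τ ad_𝒜)⁻¹(Θ𝒞ᵀ𝒞)`. -/
theorem resolvent_representation_of_Gramians {N q : ℕ}
    (calA : Matrix (Fin N) (Fin N) ℝ) (τ : ℝ) (hτ : 0 < τ)
    (hspec : ∀ μ ∈ spectrum ℂ (calA.map (Complex.ofReal · : ℝ → ℂ)),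
      |μ.re| < 1 / (2 * τ))
    (Θ : Matrix (Fin N) (Fin N) ℝ) (hΘ : Θᵀ = -Θ) (hΘinv : IsUnit Θ.det)
    (hHam : (Θ⁻¹ * calA)ᵀ = Θ⁻¹ * calA)
    (calAτ : Matrix (Fin N) (Fin N) ℝ) (hcalAτ : calAτ = calA - (1 / (2 * τ)) • 1)
    (Sig : Matrix (Fin N) (Fin N) ℝ) (hSig : Sigᵀ = Sig)
    (CC : Matrix (Fin q) (Fin N) ℝ) :
    Function.Bijective
      (fun X : Matrix (Fin N) (Fin N) ℝ => X - τ • (calA * X - X * calA))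
    ∧ Function.Bijective
      (fun X : Matrix (Fin N) (Fin N) ℝ => X + τ • (calA * X - X * calA))
    ∧ (∃! calP : Matrix (Fin N) (Fin N) ℝ,
        calAτ * calP + calP * calAτᵀ + (1 / τ) • Sig = 0)
    ∧ (∀ calP : Matrix (Fin N) (Fin N) ℝ,
        calAτ * calP + calP * calAτᵀ + (1 / τ) • Sig = 0 →
        calP * Θ⁻¹ - τ • (calA * (calP * Θ⁻¹) - (calP * Θ⁻¹) * calA) = Sig * Θ⁻¹)
    ∧ (∃! calQ : Matrix (Fin N) (Fin N) ℝ,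
        calAτᵀ * calQ + calQ * calAτ + CCᵀ * CC = 0)
    ∧ (∀ calQ : Matrix (Fin N) (Fin N) ℝ,
        calAτᵀ * calQ + calQ * calAτ + CCᵀ * CC = 0 →
        Θ * calQ + τ • (calA * (Θ * calQ) - (Θ * calQ) * calA) = τ • (Θ * CCᵀ * CC)) := by
  have hτ0 : τ ≠ 0 := hτ.ne'
  have hτC : ((τ : ℝ) : ℂ) ≠ 0 := by exact_mod_cast hτ0
  have hA' : ∀ z ∈ spectrum ℂ (cpl calA), |z.re| < 1 / (2 * τ) := hspec
  -- Bijectivity 1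
  have bij1 : Function.Bijective
      (fun X : Matrix (Fin N) (Fin N) ℝ => X - τ • (calA * X - X * calA)) := by
    have e1 : (fun X : Matrix (Fin N) (Fin N) ℝ => X - τ • (calA * X - X * calA))
        = fun X => (1 - τ • calA) * X + X * (τ • calA) := by
      funext X
      rw [Matrix.sub_mul, Matrix.one_mul, smul_mul_assoc, mul_smul_comm, smul_sub]
      abel
    rw [e1]
    apply sylvester_bij
    intro β hβ γ hγ
    rw [spec_affine (cpl calA) _ 1 (-((τ : ℝ) : ℂ)) (neg_ne_zero.mpr hτC)
      (by rw [cpl_sub, cpl_one, cpl_smul]; simp [neg_smul, sub_eq_add_neg]) β] at hβ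
    rw [spec_affine (cpl calA) _ 0 ((τ : ℝ) : ℂ) hτC
      (by rw [cpl_smul]; simp) γ] at hγ
    obtain ⟨z₁, hz₁, rfl⟩ := hβ
    obtain ⟨z₂, hz₂, rfl⟩ := hγ
    intro hc
    have hre := congrArg Complex.re hc
    simp [Complex.add_re, Complex.mul_re] at hre
    exact gap1 hτ (hA' z₁ hz₁) (hA' z₂ hz₂) (by linarith)
  -- Bijectivity 2
  have bij2 : Function.Bijective
      (fun X : Matrix (Fin N) (Fin N) ℝ => X + τ • (calA * X - X * calA)) := by
    have e2 : (fun X : Matrix (Fin N) (Fin N) ℝ => X + τ • (calA * X - X * calA))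
        = fun X => (1 + τ • calA) * X + X * (-(τ • calA)) := by
      funext X
      rw [Matrix.add_mul, Matrix.one_mul, smul_mul_assoc, Matrix.mul_neg, mul_smul_comm,
        smul_sub]
      abel
    rw [e2]
    apply sylvester_bij
    intro β hβ γ hγ
    rw [spec_affine (cpl calA) _ 1 ((τ : ℝ) : ℂ) hτC
      (by rw [cpl_add, cpl_one, cpl_smul]; simp) β] at hβ
    rw [spec_affine (cpl calA) _ 0 (-((τ : ℝ) : ℂ)) (neg_ne_zero.mpr hτC)
      (by rw [cpl_neg, cpl_smul]; simp [neg_smul]) γ] at hγ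
    obtain ⟨z₁, hz₁, rfl⟩ := hβ
    obtain ⟨z₂, hz₂, rfl⟩ := hγ
    intro hc
    have hre := congrArg Complex.re hc
    simp [Complex.add_re, Complex.mul_re] at hre
    exact gap1 hτ (hA' z₂ hz₂) (hA' z₁ hz₁) (by linarith)
  -- spectra for calAτ
  have hAτ : cpl calAτ = (-(((1 / (2 * τ) : ℝ)) : ℂ)) • 1 + (1 : ℂ) • cpl calA := by
    rw [hcalAτ, cpl_sub, cpl_smul, cpl_one]
    simp [neg_smul, sub_eq_add_neg, add_comm]
  have hspecAτ : ∀ β ∈ spectrum ℂ (cpl calAτ),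
      ∃ z ∈ spectrum ℂ (cpl calA), β = -(((1 / (2 * τ) : ℝ)) : ℂ) + 1 * z := by
    intro β hβ
    exact (spec_affine (cpl calA) _ _ 1 one_ne_zero hAτ β).mp hβ
  have hspecAτT : ∀ β ∈ spectrum ℂ (cpl calAτᵀ),
      ∃ z ∈ spectrum ℂ (cpl calA), β = -(((1 / (2 * τ) : ℝ)) : ℂ) + 1 * z := by
    intro β hβ
    rw [cpl_transpose, spectrum_transpose] at hβ
    exact hspecAτ β hβ
  have cond34 : ∀ β ∈ spectrum ℂ (cpl calAτ), ∀ γ ∈ spectrum ℂ (cpl calAτᵀ), β + γ ≠ 0 := by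
    intro β hβ γ hγ
    obtain ⟨z₁, hz₁, rfl⟩ := hspecAτ β hβ
    obtain ⟨z₂, hz₂, rfl⟩ := hspecAτT γ hγ
    intro hc
    have hre := congrArg Complex.re hc
    simp [Complex.add_re, Complex.mul_re] at hre
    have e : τ⁻¹ * 2⁻¹ = 1 / (2 * τ) := by ring
    rw [e] at hre
    exact gap2 hτ (hA' z₁ hz₁) (hA' z₂ hz₂) (by linarith)
  have bij3 : Function.Bijective
      (fun P : Matrix (Fin N) (Fin N) ℝ => calAτ * P + P * calAτᵀ) :=
    sylvester_bij _ _ cond34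
  have bij4 : Function.Bijective
      (fun Q : Matrix (Fin N) (Fin N) ℝ => calAτᵀ * Q + Q * calAτ) :=
    sylvester_bij _ _ (fun β hβ γ hγ => by
      have := cond34 γ hγ β hβ
      rw [add_comm] at this
      exact this)
  -- Hamiltonian relations
  have hΘ1 : Θ⁻¹ * Θ = 1 := Matrix.nonsing_inv_mul Θ hΘinv
  have hΘ2 : Θ * Θ⁻¹ = 1 := Matrix.mul_nonsing_inv Θ hΘinv
  have hnegInv : (-Θ)⁻¹ = -(Θ⁻¹) :=
    Matrix.inv_eq_right_inv (by rw [Matrix.neg_mul, Matrix.mul_neg, neg_neg, hΘ2])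
  have hAΘ : calAᵀ * Θ⁻¹ = -(Θ⁻¹ * calA) := by
    have h := hHam
    rw [Matrix.transpose_mul, Matrix.transpose_nonsing_inv, hΘ, hnegInv, Matrix.mul_neg] at h
    rw [← h, neg_neg]
  have hΘA : Θ * calAᵀ = -(calA * Θ) := by
    calc Θ * calAᵀ = Θ * (calAᵀ * (Θ⁻¹ * Θ)) := by rw [hΘ1, mul_one]
    _ = Θ * ((calAᵀ * Θ⁻¹) * Θ) := by rw [mul_assoc]
    _ = Θ * (-(Θ⁻¹ * calA) * Θ) := by rw [hAΘ]
    _ = -(calA * Θ) := by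
        rw [Matrix.neg_mul, Matrix.mul_neg, mul_assoc, ← mul_assoc Θ, hΘ2, one_mul]
  refine ⟨bij1, bij2, ?_, ?_, ?_, ?_⟩
  · -- existence and uniqueness of P
    obtain ⟨P, hP⟩ := bij3.surjective (-((1 / τ) • Sig))
    simp only at hP
    refine ⟨P, by show calAτ * P + P * calAτᵀ + (1 / τ) • Sig = 0; rw [hP]; simp,
      fun y hy => bij3.injective ?_⟩
    show calAτ * y + y * calAτᵀ = calAτ * P + P * calAτᵀ
    rw [hP]
    exact eq_neg_of_add_eq_zero_left hy
  · -- identity for P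
    intro P hP
    rw [hcalAτ, Matrix.transpose_sub, Matrix.transpose_smul, Matrix.transpose_one,
      Matrix.sub_mul, Matrix.mul_sub, smul_mul_assoc, Matrix.one_mul,
      mul_smul_comm, Matrix.mul_one] at hP
    have key : P - τ • (calA * P) - τ • (P * calAᵀ) = Sig := by
      have hsub : P - τ • (calA * P) - τ • (P * calAᵀ) - Sig
          = (-τ : ℝ) • ((calA * P - (1 / (2 * τ)) • P) + (P * calAᵀ - (1 / (2 * τ)) • P)
            + (1 / τ) • Sig) := by
        match_scalars <;> field_simp <;> ring
      rw [hP, smul_zero, sub_eq_zero] at hsub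
      exact hsub
    have h3 := congrArg (fun M => M * Θ⁻¹) key
    simp only [Matrix.sub_mul, smul_mul_assoc] at h3
    rw [mul_assoc P calAᵀ Θ⁻¹, hAΘ, Matrix.mul_neg, ← mul_assoc P Θ⁻¹ calA,
      mul_assoc calA P Θ⁻¹] at h3
    rw [smul_sub]
    rw [← h3]
    simp only [smul_neg]
    abel
  · -- existence and uniqueness of Q
    obtain ⟨Q, hQ⟩ := bij4.surjective (-(CCᵀ * CC))
    simp only at hQ
    refine ⟨Q, by show calAτᵀ * Q + Q * calAτ + CCᵀ * CC = 0; rw [hQ]; simp,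
      fun y hy => bij4.injective ?_⟩
    show calAτᵀ * y + y * calAτ = calAτᵀ * Q + Q * calAτ
    rw [hQ]
    exact eq_neg_of_add_eq_zero_left hy
  · -- identity for Q
    intro Q hQ
    rw [hcalAτ, Matrix.transpose_sub, Matrix.transpose_smul, Matrix.transpose_one,
      Matrix.sub_mul, Matrix.mul_sub, smul_mul_assoc, Matrix.one_mul,
      mul_smul_comm, Matrix.mul_one] at hQ
    have key : Q - τ • (calAᵀ * Q) - τ • (Q * calA) = τ • (CCᵀ * CC) := by
      have hsub : Q - τ • (calAᵀ * Q) - τ • (Q * calA) - τ • (CCᵀ * CC)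
          = (-τ : ℝ) • ((calAᵀ * Q - (1 / (2 * τ)) • Q) + (Q * calA - (1 / (2 * τ)) • Q)
            + CCᵀ * CC) := by
        match_scalars <;> field_simp <;> ring
      rw [hQ, smul_zero, sub_eq_zero] at hsub
      exact hsub
    have h3 := congrArg (fun M => Θ * M) key
    simp only [Matrix.mul_sub, mul_smul_comm] at h3
    rw [← mul_assoc Θ calAᵀ Q, hΘA, Matrix.neg_mul, mul_assoc calA Θ Q,
      ← mul_assoc Θ Q calA] at h3
    rw [smul_sub]
    rw [← Matrix.mul_assoc Θ CCᵀ CC] at h3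
    rw [← h3]
    simp only [smul_neg]
    abel
end

section
/- Let Θ = diag(Θ₁, Θ₂) with Θ₁ ∈ 𝔸ₙ, Θ₂ ∈ 𝔸_ν invertible, 𝒜 = [[2Θ₁K, 2Θ₁L],[2Θ₂Lᵀ, 2Θ₂M]] with K ∈ 𝕊ₙ, M ∈ 𝕊_ν, L ∈ ℝ^{n×ν}, and let P, Q be real (n+ν)×(n+ν) matrices satisfying [𝒜, P] = (1/τ)(P − ΣΘ^{-1}) and [𝒜, Q] = Θ𝒞ᵀ𝒞 − (1/τ)Q for some Σ ∈ 𝕊_{n+ν}, real matrix 𝒞 and τ > 0. Let D := [Q, P] with blocks D_{jk} conformal with the partition (n, ν), and suppose D₂₂ = 0. Then (1/2)((1/τ)[ΣΘ^{-1}, Q]₁₂ + [Θ𝒞ᵀ𝒞, P]₁₂) + D₁₁Θ₁L − Θ₁KD₁₂ + D₁₂Θ₂M = 0, where [·,·]₁₂ denotes the (1,2) block of the commutator. Moreover, if in addition D₁₂ = (λ/2)ΠLP₂₂ with Π ≻ 0, λ > 0 and P₂₂ (the (2,2) block of P) invertible, then L = (2/λ)Π^{-1}D₁₂P₂₂^{-1}.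 -/
open Matrix

private lemma tb12_sub {n ν m : ℕ} (A B : Matrix (Fin n ⊕ Fin ν) (Fin n ⊕ Fin m) ℝ) :
    (A - B).toBlocks₁₂ = A.toBlocks₁₂ - B.toBlocks₁₂ := rfl

/-- (Lemma 6 of the paper.) For the plant-observer Hamiltonian dynamics
matrix `𝒜` and Hamiltonian-form Gramians `P`, `Q` satisfying the Lie-algebraic Lyapunov
equations, with `D := [Q, P]` and `D₂₂ = 0`, the `(1,2)` block of the Jacobi-identity
relation holds; moreover, if `D₁₂ = (λ/2)ΠLP₂₂` with `Π ≻ 0`, `λ > 0` and `P₂₂`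
invertible, then `L = (2/λ)Π⁻¹D₁₂P₂₂⁻¹`. -/
theorem lemma6_block12_relation {n ν q : ℕ}
    (Θ₁ K : Matrix (Fin n) (Fin n) ℝ) (Θ₂ M : Matrix (Fin ν) (Fin ν) ℝ)
    (L : Matrix (Fin n) (Fin ν) ℝ)
    (hΘ₁ : Θ₁ᵀ = -Θ₁) (hΘ₁inv : IsUnit Θ₁.det)
    (hΘ₂ : Θ₂ᵀ = -Θ₂) (hΘ₂inv : IsUnit Θ₂.det)
    (hK : Kᵀ = K) (hM : Mᵀ = M)
    (Θ calA : Matrix (Fin n ⊕ Fin ν) (Fin n ⊕ Fin ν) ℝ)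
    (hΘ : Θ = fromBlocks Θ₁ 0 0 Θ₂)
    (hcalA : calA = fromBlocks
      ((2:ℝ) • (Θ₁ * K)) ((2:ℝ) • (Θ₁ * L)) ((2:ℝ) • (Θ₂ * Lᵀ)) ((2:ℝ) • (Θ₂ * M)))
    (P Q : Matrix (Fin n ⊕ Fin ν) (Fin n ⊕ Fin ν) ℝ)
    (Sig : Matrix (Fin n ⊕ Fin ν) (Fin n ⊕ Fin ν) ℝ) (hSig : Sigᵀ = Sig)
    (CC : Matrix (Fin q) (Fin n ⊕ Fin ν) ℝ) (τ : ℝ) (hτ : 0 < τ)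
    (hPeq : calA * P - P * calA = (1 / τ) • (P - Sig * Θ⁻¹))
    (hQeq : calA * Q - Q * calA = Θ * CCᵀ * CC - (1 / τ) • Q)
    (D : Matrix (Fin n ⊕ Fin ν) (Fin n ⊕ Fin ν) ℝ) (hD : D = Q * P - P * Q)
    (hD22 : D.toBlocks₂₂ = 0) :
    ((1 / 2 : ℝ) • ((1 / τ) • ((Sig * Θ⁻¹) * Q - Q * (Sig * Θ⁻¹)).toBlocks₁₂
          + ((Θ * CCᵀ * CC) * P - P * (Θ * CCᵀ * CC)).toBlocks₁₂)
        + D.toBlocks₁₁ * Θ₁ * L - Θ₁ * K * D.toBlocks₁₂ + D.toBlocks₁₂ * Θ₂ * M = 0)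
    ∧ (∀ (Pim : Matrix (Fin n) (Fin n) ℝ) (lam : ℝ),
        Pim.PosDef → 0 < lam → IsUnit (P.toBlocks₂₂).det →
        D.toBlocks₁₂ = (lam / 2) • (Pim * L * P.toBlocks₂₂) →
        L = (2 / lam) • (Pim⁻¹ * D.toBlocks₁₂ * (P.toBlocks₂₂)⁻¹)) := by
  constructor
  · -- Jacobi identity for the commutators
    set E := Θ * CCᵀ * CC with hE
    set F := Sig * Θ⁻¹ with hF
    set t := (1 / τ : ℝ) with ht
    have key : calA * D - D * calA = t • (F * Q - Q * F) + (E * P - P * E) := by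
      rw [hD]
      calc calA * (Q * P - P * Q) - (Q * P - P * Q) * calA
          = (calA*Q - Q*calA)*P - P*(calA*Q - Q*calA)
            + (Q*(calA*P - P*calA) - (calA*P - P*calA)*Q) := by noncomm_ring
        _ = (E - t•Q)*P - P*(E - t•Q) + (Q*(t•(P-F)) - (t•(P-F))*Q) := by rw [hPeq, hQeq]
        _ = t • (F * Q - Q * F) + (E * P - P * E) := by
            simp only [smul_sub, sub_mul, mul_sub, mul_smul_comm, smul_mul_assoc]
            abel
    have hb : t • (F * Q - Q * F).toBlocks₁₂ + (E * P - P * E).toBlocks₁₂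
        = (calA * D - D * calA).toBlocks₁₂ := (congrArg Matrix.toBlocks₁₂ key).symm
    have hL12 : (calA * D - D * calA).toBlocks₁₂
        = ((2:ℝ)•(Θ₁*K)) * D.toBlocks₁₂ + ((2:ℝ)•(Θ₁*L)) * D.toBlocks₂₂
          - (D.toBlocks₁₁ * ((2:ℝ)•(Θ₁*L)) + D.toBlocks₁₂ * ((2:ℝ)•(Θ₂*M))) := by
      conv_lhs => rw [hcalA, ← fromBlocks_toBlocks D]
      rw [fromBlocks_multiply, fromBlocks_multiply, tb12_sub]
      simp [toBlocks_fromBlocks₁₂]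
    rw [hb, hL12, hD22]
    simp only [Matrix.mul_zero, add_zero, Matrix.smul_mul, Matrix.mul_smul, Matrix.mul_assoc]
    module
  · intro Pim lam hPim hlam hP22 h12
    have hPiU : IsUnit Pim.det := isUnit_iff_ne_zero.mpr hPim.det_pos.ne'
    rw [h12]
    simp only [Matrix.mul_smul, Matrix.smul_mul, smul_smul]
    have hc : (2 / lam) * (lam / 2) = 1 := by field_simp
    rw [hc, one_smul]
    rw [show Pim⁻¹ * (Pim * L * P.toBlocks₂₂) * (P.toBlocks₂₂)⁻¹
        = (Pim⁻¹ * Pim) * L * (P.toBlocks₂₂ * (P.toBlocks₂₂)⁻¹) by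
      simp only [Matrix.mul_assoc]]
    rw [nonsing_inv_mul _ hPiU, mul_nonsing_inv _ hP22, Matrix.one_mul, Matrix.mul_one]
end

section
/- Let n = ν, let Θ₁, Θ₂ ∈ 𝔸ₙ be invertible, 𝒜 = [[2Θ₁K, 2Θ₁L],[2Θ₂Lᵀ, 2Θ₂M]] with K, M ∈ 𝕊ₙ and L ∈ ℝ^{n×n}, and let P, Q satisfy [𝒜, P] = (1/τ)(P − ΣΘ^{-1}) and [𝒜, Q] = Θ𝒞ᵀ𝒞 − (1/τ)Q, where Θ = diag(Θ₁, Θ₂). Let D := [Q, P], and suppose the optimality conditions D₁₂ = (λ/2)ΠLP₂₂ and D₂₂ = 0 hold, with Π ≻ 0, λ > 0. Under the nondegeneracy conditions that P₂₂ is invertible and det D₁₂ ≠ 0, the coupling and energy matrices of the observer are given by L = (2/λ)Π^{-1}D₁₂P₂₂^{-1} and M = Θ₂^{-1}D₁₂^{-1}(Θ₁KD₁₂ − D₁₁Θ₁L − (1/2)((1/τ)[ΣΘ^{-1}, Q]₁₂ + [Θ𝒞ᵀ𝒞, P]₁₂)). -/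
open Matrix

/-- (Theorem 4 of the paper.) For equally dimensioned plant and observer,
a nondegenerate stationary point of the CQF problem has coupling and energy matrices
`L = (2/λ)Π⁻¹D₁₂P₂₂⁻¹` and
`M = Θ₂⁻¹D₁₂⁻¹(Θ₁KD₁₂ − D₁₁Θ₁L − (1/2)((1/τ)[ΣΘ⁻¹,Q]₁₂ + [Θ𝒞ᵀ𝒞,P]₁₂))`. -/
theorem theorem4_optimal_L_M {n q : ℕ}
    (Θ₁ Θ₂ K M L : Matrix (Fin n) (Fin n) ℝ)
    (hΘ₁ : Θ₁ᵀ = -Θ₁) (hΘ₁inv : IsUnit Θ₁.det)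
    (hΘ₂ : Θ₂ᵀ = -Θ₂) (hΘ₂inv : IsUnit Θ₂.det)
    (hK : Kᵀ = K) (hM : Mᵀ = M)
    (Θ calA : Matrix (Fin n ⊕ Fin n) (Fin n ⊕ Fin n) ℝ)
    (hΘ : Θ = fromBlocks Θ₁ 0 0 Θ₂)
    (hcalA : calA = fromBlocks
      ((2:ℝ) • (Θ₁ * K)) ((2:ℝ) • (Θ₁ * L)) ((2:ℝ) • (Θ₂ * Lᵀ)) ((2:ℝ) • (Θ₂ * M)))
    (P Q : Matrix (Fin n ⊕ Fin n) (Fin n ⊕ Fin n) ℝ)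
    (Sig : Matrix (Fin n ⊕ Fin n) (Fin n ⊕ Fin n) ℝ) (hSig : Sigᵀ = Sig)
    (CC : Matrix (Fin q) (Fin n ⊕ Fin n) ℝ) (τ : ℝ) (hτ : 0 < τ)
    (hPeq : calA * P - P * calA = (1 / τ) • (P - Sig * Θ⁻¹))
    (hQeq : calA * Q - Q * calA = Θ * CCᵀ * CC - (1 / τ) • Q)
    (D : Matrix (Fin n ⊕ Fin n) (Fin n ⊕ Fin n) ℝ) (hD : D = Q * P - P * Q)
    (Pim : Matrix (Fin n) (Fin n) ℝ) (lam : ℝ) (hPim : Pim.PosDef) (hlam : 0 < lam)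
    (hopt1 : D.toBlocks₁₂ = (lam / 2) • (Pim * L * P.toBlocks₂₂))
    (hopt2 : D.toBlocks₂₂ = 0)
    (hP22 : IsUnit (P.toBlocks₂₂).det) (hD12 : D.toBlocks₁₂.det ≠ 0) :
    L = (2 / lam) • (Pim⁻¹ * D.toBlocks₁₂ * (P.toBlocks₂₂)⁻¹)
    ∧ M = Θ₂⁻¹ * (D.toBlocks₁₂)⁻¹ *
        (Θ₁ * K * D.toBlocks₁₂ - D.toBlocks₁₁ * Θ₁ * L
          - (1 / 2 : ℝ) • ((1 / τ) • ((Sig * Θ⁻¹) * Q - Q * (Sig * Θ⁻¹)).toBlocks₁₂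
              + ((Θ * CCᵀ * CC) * P - P * (Θ * CCᵀ * CC)).toBlocks₁₂)) := by
  have hPimdet : IsUnit Pim.det := isUnit_iff_ne_zero.mpr (ne_of_gt hPim.det_pos)
  have hlamne : lam ≠ 0 := ne_of_gt hlam
  have hD12u : IsUnit (D.toBlocks₁₂).det := isUnit_iff_ne_zero.mpr hD12
  constructor
  · rw [hopt1, Matrix.mul_smul, Matrix.smul_mul, smul_smul]
    have : (2 / lam) * (lam / 2) = 1 := by field_simp
    rw [this, one_smul, Matrix.mul_assoc Pim L, Matrix.nonsing_inv_mul_cancel_left _ _ hPimdet,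
      Matrix.mul_assoc, Matrix.mul_nonsing_inv _ hP22, Matrix.mul_one]
  · -- key commutator identity
    have key : calA * D - D * calA =
        (1 / τ) • ((Sig * Θ⁻¹) * Q - Q * (Sig * Θ⁻¹)) +
          ((Θ * CCᵀ * CC) * P - P * (Θ * CCᵀ * CC)) := by
      have expand : calA * D - D * calA =
          (calA * Q - Q * calA) * P + Q * (calA * P - P * calA)
            - ((calA * P - P * calA) * Q + P * (calA * Q - Q * calA)) := by
        rw [hD]; noncomm_ring
      rw [expand, hPeq, hQeq]
      simp only [Matrix.smul_mul, Matrix.mul_smul, smul_sub, sub_mul, mul_sub, Matrix.mul_assoc]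
      abel
    -- take the (1,2) block
    have h1 : ∀ (A B : Matrix (Fin n ⊕ Fin n) (Fin n ⊕ Fin n) ℝ),
        (A - B).toBlocks₁₂ = A.toBlocks₁₂ - B.toBlocks₁₂ := by
      intro A B; ext i j; simp [Matrix.toBlocks₁₂]
    have h2 : ∀ (c : ℝ) (A : Matrix (Fin n ⊕ Fin n) (Fin n ⊕ Fin n) ℝ),
        (c • A).toBlocks₁₂ = c • A.toBlocks₁₂ := by
      intro c A; ext i j; simp [Matrix.toBlocks₁₂]
    have h3 : ∀ (A B : Matrix (Fin n ⊕ Fin n) (Fin n ⊕ Fin n) ℝ),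
        (A + B).toBlocks₁₂ = A.toBlocks₁₂ + B.toBlocks₁₂ := by
      intro A B; ext i j; simp [Matrix.toBlocks₁₂]
    have hblock := congrArg Matrix.toBlocks₁₂ key
    rw [h1, h3, h2] at hblock
    rw [hcalA, ← Matrix.fromBlocks_toBlocks D, Matrix.fromBlocks_multiply,
      Matrix.fromBlocks_multiply, Matrix.toBlocks_fromBlocks₁₂,
      Matrix.toBlocks_fromBlocks₁₂] at hblock
    have hblock' : (2:ℝ) • (Θ₁ * K) * D.toBlocks₁₂ + (2:ℝ) • (Θ₁ * L) * D.toBlocks₂₂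
        - (D.toBlocks₁₁ * ((2:ℝ) • (Θ₁ * L)) + D.toBlocks₁₂ * ((2:ℝ) • (Θ₂ * M)))
        = (1 / τ) • ((Sig * Θ⁻¹) * Q - Q * (Sig * Θ⁻¹)).toBlocks₁₂
          + ((Θ * CCᵀ * CC) * P - P * (Θ * CCᵀ * CC)).toBlocks₁₂ := by
      exact hblock
    rw [hopt2, Matrix.mul_zero, add_zero] at hblock'
    -- solve for M
    have hsolve : D.toBlocks₁₂ * (Θ₂ * M) =
        Θ₁ * K * D.toBlocks₁₂ - D.toBlocks₁₁ * Θ₁ * L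
          - (1 / 2 : ℝ) • ((1 / τ) • ((Sig * Θ⁻¹) * Q - Q * (Sig * Θ⁻¹)).toBlocks₁₂
              + ((Θ * CCᵀ * CC) * P - P * (Θ * CCᵀ * CC)).toBlocks₁₂) := by
      have := hblock'
      rw [← this]
      simp only [Matrix.smul_mul, Matrix.mul_smul, smul_sub, smul_add, smul_smul,
        Matrix.mul_assoc]
      norm_num
    rw [← hsolve, Matrix.mul_assoc Θ₂⁻¹, Matrix.nonsing_inv_mul_cancel_left _ _ hD12u,
      Matrix.nonsing_inv_mul_cancel_left _ _ hΘ₂inv]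
end

section
/- Let Θ₀ ∈ 𝔸ₙ be invertible, S₀ ∈ ℝ^{n×n} invertible, K, M ∈ 𝕊ₙ, L ∈ ℝ^{n×n}, and set S := [S₀, −S₀] ∈ ℝ^{n×2n} and 𝒜 := [[2Θ₀K, 2Θ₀L],[2Θ₀Lᵀ, 2Θ₀M]]. Then there exists a matrix Â ∈ ℝ^{n×n} with S𝒜 = ÂS if and only if K = M and L = Lᵀ. In that case Â is unique and equals Â = 2Θ̂R̂, where Θ̂ := 2S₀Θ₀S₀ᵀ and R̂ := (1/2)S₀^{-ᵀ}(K − L)S₀^{-1} is real symmetric. -/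
open Matrix

/-- (Lemma 7 of the paper.) With `S := [S₀, −S₀]` and the plant-observer
dynamics matrix `𝒜`, there exists `Â` with `S𝒜 = ÂS` iff `K = M` and `L = Lᵀ`; in that
case `Â` is unique and equals `2Θ̂R̂` with `Θ̂ := 2S₀Θ₀S₀ᵀ` and the real symmetric
`R̂ := (1/2)S₀⁻ᵀ(K − L)S₀⁻¹`. -/
theorem autonomous_error_dynamics_iff {n : ℕ}
    (Θ₀ S₀ K M L : Matrix (Fin n) (Fin n) ℝ)
    (hΘ₀ : Θ₀ᵀ = -Θ₀) (hΘ₀inv : IsUnit Θ₀.det) (hS₀inv : IsUnit S₀.det)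
    (hK : Kᵀ = K) (hM : Mᵀ = M)
    (S : Matrix (Fin n) (Fin n ⊕ Fin n) ℝ) (hS : S = fromCols S₀ (-S₀))
    (calA : Matrix (Fin n ⊕ Fin n) (Fin n ⊕ Fin n) ℝ)
    (hcalA : calA = fromBlocks
      ((2:ℝ) • (Θ₀ * K)) ((2:ℝ) • (Θ₀ * L)) ((2:ℝ) • (Θ₀ * Lᵀ)) ((2:ℝ) • (Θ₀ * M))) :
    ((∃ Ahat : Matrix (Fin n) (Fin n) ℝ, S * calA = Ahat * S) ↔ (K = M ∧ L = Lᵀ))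
    ∧ (K = M → L = Lᵀ →
        (((1 / 2 : ℝ) • ((S₀⁻¹)ᵀ * (K - L) * S₀⁻¹))ᵀ
            = (1 / 2 : ℝ) • ((S₀⁻¹)ᵀ * (K - L) * S₀⁻¹)
          ∧ ∀ Ahat : Matrix (Fin n) (Fin n) ℝ, S * calA = Ahat * S →
              Ahat = (2:ℝ) • (((2:ℝ) • (S₀ * Θ₀ * S₀ᵀ)) *
                ((1 / 2 : ℝ) • ((S₀⁻¹)ᵀ * (K - L) * S₀⁻¹))))) := by
  subst hS hcalA
  have hS₀ : S₀⁻¹ * S₀ = 1 := nonsing_inv_mul _ hS₀inv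
  have hS₀' : S₀ * S₀⁻¹ = 1 := mul_nonsing_inv _ hS₀inv
  have hST : S₀ᵀ * (S₀⁻¹)ᵀ = 1 := by
    rw [← transpose_mul, hS₀, transpose_one]
  -- the key reformulation of the intertwining relation
  have key : ∀ Ahat : Matrix (Fin n) (Fin n) ℝ,
      fromCols S₀ (-S₀) * fromBlocks
        ((2:ℝ) • (Θ₀ * K)) ((2:ℝ) • (Θ₀ * L)) ((2:ℝ) • (Θ₀ * Lᵀ)) ((2:ℝ) • (Θ₀ * M))
        = Ahat * fromCols S₀ (-S₀) ↔
      (Ahat * S₀ = (2:ℝ) • (S₀ * Θ₀ * (K - Lᵀ))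
        ∧ Ahat * S₀ = (2:ℝ) • (S₀ * Θ₀ * (M - L))) := by
    intro Ahat
    rw [fromCols_mul_fromBlocks, mul_fromCols, fromCols_ext_iff]
    constructor
    · rintro ⟨h1, h2⟩
      constructor
      · rw [← h1]; simp [Matrix.mul_smul, mul_sub, Matrix.mul_assoc, smul_sub]; abel
      · have h2' := congrArg Neg.neg h2
        simp only [Matrix.mul_neg, neg_neg, neg_add] at h2'
        rw [← h2']; simp [Matrix.mul_smul, mul_sub, Matrix.mul_assoc, smul_sub]
        abel
    · rintro ⟨h1, h2⟩
      constructor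
      · rw [h1]; simp [Matrix.mul_smul, mul_sub, Matrix.mul_assoc, smul_sub]; abel
      · rw [Matrix.mul_neg, h2]
        simp [Matrix.mul_smul, mul_sub, Matrix.mul_assoc, smul_sub]
        abel
  have cancel : ∀ X Y : Matrix (Fin n) (Fin n) ℝ,
      (2:ℝ) • (S₀ * Θ₀ * X) = (2:ℝ) • (S₀ * Θ₀ * Y) → X = Y := by
    intro X Y h
    have h' : S₀ * Θ₀ * X = S₀ * Θ₀ * Y := smul_right_injective _ two_ne_zero h
    have hΘ : Θ₀⁻¹ * Θ₀ = 1 := nonsing_inv_mul _ hΘ₀inv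
    calc X = Θ₀⁻¹ * (S₀⁻¹ * (S₀ * Θ₀ * X)) := by
            rw [Matrix.mul_assoc S₀, ← Matrix.mul_assoc S₀⁻¹, hS₀, Matrix.one_mul,
              ← Matrix.mul_assoc, hΘ, Matrix.one_mul]
      _ = Θ₀⁻¹ * (S₀⁻¹ * (S₀ * Θ₀ * Y)) := by rw [h']
      _ = Y := by
            rw [Matrix.mul_assoc S₀, ← Matrix.mul_assoc S₀⁻¹, hS₀, Matrix.one_mul,
              ← Matrix.mul_assoc, hΘ, Matrix.one_mul]
  constructor
  · constructor
    · rintro ⟨Ahat, h⟩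
      obtain ⟨h1, h2⟩ := (key Ahat).mp h
      have h3 : K - Lᵀ = M - L := cancel _ _ (h1 ▸ h2)
      have h4 : K - L = M - Lᵀ := by
        have := congrArg Matrix.transpose h3
        simpa [transpose_sub, hK, hM] using this
      have h5 : K + K = M + M := by
        calc K + K = (K - Lᵀ) + (K - L) + (Lᵀ + L) := by abel
          _ = (M - L) + (M - Lᵀ) + (Lᵀ + L) := by rw [h3, h4]
          _ = M + M := by abel
      have hKM : K = M := by
        have h6 : (2:ℝ) • (K - M) = 0 := by
          rw [two_smul]
          calc K - M + (K - M) = (K + K) - (M + M) := by abel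
            _ = 0 := by rw [h5, sub_self]
        rcases smul_eq_zero.mp h6 with h | h
        · norm_num at h
        · exact sub_eq_zero.mp h
      refine ⟨hKM, ?_⟩
      rw [hKM] at h3
      exact (sub_right_inj.mp h3).symm
    · rintro ⟨hKM, hL⟩
      refine ⟨(2:ℝ) • (S₀ * Θ₀ * (K - L) * S₀⁻¹), (key _).mpr ⟨?_, ?_⟩⟩
      · rw [Matrix.smul_mul, Matrix.mul_assoc, hS₀, Matrix.mul_one, ← hL]
      · rw [Matrix.smul_mul, Matrix.mul_assoc, hS₀, Matrix.mul_one, ← hKM]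
  · intro hKM hL
    constructor
    · simp [transpose_smul, transpose_mul, transpose_sub, hK, ← hL, Matrix.mul_assoc]
    · intro Ahat h
      obtain ⟨h1, -⟩ := (key Ahat).mp h
      have : Ahat = (2:ℝ) • (S₀ * Θ₀ * (K - Lᵀ)) * S₀⁻¹ := by
        rw [← h1, Matrix.mul_assoc, hS₀', Matrix.mul_one]
      have hprod : ((2:ℝ) • (S₀ * Θ₀ * S₀ᵀ)) * ((1/2:ℝ) • ((S₀⁻¹)ᵀ * (K - L) * S₀⁻¹))
          = S₀ * Θ₀ * (K - L) * S₀⁻¹ := by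
        rw [Matrix.smul_mul, Matrix.mul_smul, smul_smul]
        norm_num
        rw [← Matrix.mul_assoc, ← Matrix.mul_assoc, Matrix.mul_assoc (S₀*Θ₀) S₀ᵀ, hST,
          Matrix.mul_one]
      rw [this, ← hL, hprod, Matrix.smul_mul]
end

section
/- Let 𝒜 ∈ ℝ^{N×N}, Â ∈ ℝ^{p×p} and S ∈ ℝ^{p×N} satisfy the intertwining relation S𝒜 = ÂS, let τ > 0, and suppose both 𝒜_τ := 𝒜 − (1/(2τ))I_N and Â_τ := Â − (1/(2τ))I_p are Hurwitz. Then the unique solution 𝒬 of the algebraic Lyapunov equation 𝒜_τᵀ𝒬 + 𝒬𝒜_τ + SᵀS = 0 is 𝒬 = Sᵀ𝒬̂S, where 𝒬̂ := 𝐋(Â_τᵀ, I_p) is the unique solution of Â_τᵀ𝒬̂ + 𝒬̂Â_τ + I_p = 0. Equivalently, 𝐋(𝒜_τᵀ, SᵀS) = Sᵀ𝐋(Â_τᵀ, I_p)S. -/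
open Matrix MeasureTheory

namespace GramianAux
open NormedSpace

section A
attribute [local instance] Matrix.linftyOpSemiNormedRing Matrix.linftyOpNormedRing
  Matrix.linftyOpNormedAlgebra

variable {m n p : Type*} [Fintype m] [DecidableEq m] [Fintype n] [DecidableEq n]
  [Fintype p] [DecidableEq p]

lemma entry_hasDerivAt (M : Matrix m m ℝ) (t : ℝ) (i j : m) :
    HasDerivAt (fun s : ℝ => exp (s • M) i j) ((M * exp (t • M)) i j) t := by
  have h := hasDerivAt_exp_smul_const' (𝕂 := ℝ) M t
  let L : Matrix m m ℝ →ₗ[ℝ] ℝ :=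
    { toFun := fun A => A i j, map_add' := fun _ _ => rfl, map_smul' := fun _ _ => rfl }
  have hL : Continuous L := (continuous_apply j).comp (continuous_apply i)
  exact ((ContinuousLinearMap.hasFDerivAt (⟨L, hL⟩ : Matrix m m ℝ →L[ℝ] ℝ)).comp_hasDerivAt t h :)

lemma exp_comm (M : Matrix m m ℝ) (t : ℝ) :
    M * exp (t • M) = exp (t • M) * M :=
  (((Commute.refl M).smul_left t).exp_left).symm

lemma intertwine_exp {S : Matrix p n ℝ} {C : Matrix n n ℝ} {B : Matrix p p ℝ}
    (h : S * C = B * S) (t : ℝ) :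
    S * exp (t • C) = exp (t • B) * S := by
  have hpow : ∀ k : ℕ, S * (t • C) ^ k = (t • B) ^ k * S := by
    intro k
    induction k with
    | zero => simp
    | succ k ih =>
      rw [pow_succ, ← Matrix.mul_assoc, ih, Matrix.mul_assoc, Matrix.mul_smul, h,
        pow_succ, Matrix.mul_assoc, Matrix.mul_smul, Matrix.smul_mul, Matrix.mul_smul]
  let L : Matrix n n ℝ →ₗ[ℝ] Matrix p n ℝ :=
    { toFun := fun A => S * A, map_add' := fun A B => Matrix.mul_add S A B,
      map_smul' := fun c A => (Matrix.mul_smul S c A) }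
  let R : Matrix p p ℝ →ₗ[ℝ] Matrix p n ℝ :=
    { toFun := fun A => A * S, map_add' := fun A B => Matrix.add_mul A B S,
      map_smul' := fun c A => (Matrix.smul_mul c A S) }
  have hexpC : exp (t • C) = ∑' k : ℕ, ((k.factorial : ℝ)⁻¹) • (t • C) ^ k := by
    rw [exp_eq_tsum ℝ]
  have hexpB : exp (t • B) = ∑' k : ℕ, ((k.factorial : ℝ)⁻¹) • (t • B) ^ k := by
    rw [exp_eq_tsum ℝ]
  calc S * exp (t • C) = L.toContinuousLinearMap (∑' k : ℕ, ((k.factorial : ℝ)⁻¹) • (t • C) ^ k) := by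
        rw [← hexpC]; rfl
    _ = ∑' k : ℕ, L.toContinuousLinearMap (((k.factorial : ℝ)⁻¹) • (t • C) ^ k) :=
        L.toContinuousLinearMap.map_tsum (expSeries_summable' (t • C))
    _ = ∑' k : ℕ, R.toContinuousLinearMap (((k.factorial : ℝ)⁻¹) • (t • B) ^ k) := by
        refine tsum_congr fun k => ?_
        rw [L.toContinuousLinearMap.map_smul, R.toContinuousLinearMap.map_smul]
        congr 1
        show S * (t • C) ^ k = (t • B) ^ k * S
        rw [hpow]
    _ = R.toContinuousLinearMap (∑' k : ℕ, ((k.factorial : ℝ)⁻¹) • (t • B) ^ k) :=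
        (R.toContinuousLinearMap.map_tsum (expSeries_summable' (t • B))).symm
    _ = exp (t • B) * S := by rw [← hexpB]; rfl

end A


section Decay
attribute [local instance] Matrix.linftyOpSemiNormedRing Matrix.linftyOpNormedRing
  Matrix.linftyOpNormedAlgebra

variable {m : Type*} [Fintype m] [DecidableEq m]

noncomputable def mulVecCLM (v : m → ℂ) : Matrix m m ℂ →L[ℂ] (m → ℂ) :=
  LinearMap.toContinuousLinearMap
    { toFun := fun A => A *ᵥ v
      map_add' := fun A B => Matrix.add_mulVec A B v
      map_smul' := fun c A => Matrix.smul_mulVec c A v }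

@[simp] lemma mulVecCLM_apply (v : m → ℂ) (A : Matrix m m ℂ) : mulVecCLM v A = A *ᵥ v := rfl

lemma exp_mulVec_eq (P : Matrix m m ℂ) (v : m → ℂ) :
    exp P *ᵥ v = ∑' k : ℕ, ((k.factorial : ℂ)⁻¹) • (P ^ k *ᵥ v) := by
  have h1 : exp P = ∑' k : ℕ, ((k.factorial : ℂ)⁻¹) • P ^ k := by rw [exp_eq_tsum ℂ]
  calc exp P *ᵥ v = mulVecCLM v (∑' k : ℕ, ((k.factorial : ℂ)⁻¹) • P ^ k) := by
        rw [← h1]; rfl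
    _ = ∑' k : ℕ, mulVecCLM v (((k.factorial : ℂ)⁻¹) • P ^ k) :=
        (mulVecCLM v).map_tsum (expSeries_summable' (𝕂 := ℂ) P)
    _ = _ := by
        refine tsum_congr fun k => ?_
        rw [(mulVecCLM v).map_smul, mulVecCLM_apply]

lemma exp_smul_one (c : ℂ) :
    exp (c • (1 : Matrix m m ℂ)) = Complex.exp c • (1 : Matrix m m ℂ) := by
  rw [Matrix.smul_one_eq_diagonal, Matrix.exp_diagonal, Pi.exp_def]
  rw [Matrix.smul_one_eq_diagonal]
  congr 1
  funext _
  rw [← Complex.exp_eq_exp_ℂ]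

lemma vec_decay (Mc : Matrix m m ℂ) {μ : ℂ} (hμ : μ.re < 0) (v : m → ℂ)
    (hv : v ∈ Module.End.maxGenEigenspace (Matrix.toLinAlgEquiv' Mc) μ) :
    ∃ C : ℝ, 0 ≤ C ∧ ∀ t : ℝ, 0 ≤ t →
      ‖exp (t • Mc) *ᵥ v‖ ≤ C * Real.exp (μ.re / 2 * t) := by
  classical
  obtain ⟨k₀, hk₀⟩ := (Module.End.mem_maxGenEigenspace _ _ _).1 hv
  set N : Matrix m m ℂ := Mc - μ • 1 with hNdef
  have hNv : N ^ k₀ *ᵥ v = 0 := by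
    have h1 : Matrix.toLinAlgEquiv' (N ^ k₀) =
        ((Matrix.toLinAlgEquiv' Mc) - μ • 1) ^ k₀ := by
      have h2 : Matrix.toLinAlgEquiv' (μ • (1 : Matrix m m ℂ)) =
          μ • (1 : Module.End ℂ (m → ℂ)) := by
        apply LinearMap.ext
        intro w
        simp [Matrix.toLinAlgEquiv'_apply, Matrix.smul_mulVec]
      rw [map_pow, map_sub, h2]
    calc N ^ k₀ *ᵥ v = Matrix.toLinAlgEquiv' (N ^ k₀) v :=
          (Matrix.toLinAlgEquiv'_apply _ _).symm
      _ = 0 := by rw [h1]; exact hk₀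
  have hvanish : ∀ k, k₀ ≤ k → N ^ k *ᵥ v = 0 := fun k hk => by
    rw [← Nat.sub_add_cancel hk, pow_add, ← Matrix.mulVec_mulVec, hNv, Matrix.mulVec_zero]
  have key : ∀ t : ℝ, exp (t • Mc) *ᵥ v =
      Complex.exp ((t : ℂ) * μ) •
        ∑ k ∈ Finset.range k₀, ((k.factorial : ℂ)⁻¹) • ((t ^ k : ℝ) • (N ^ k *ᵥ v)) := by
    intro t
    have hsplit : t • Mc = ((t : ℂ) * μ) • (1 : Matrix m m ℂ) + t • N := by
      ext i j
      by_cases h : i = j <;>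
        simp [hNdef, Matrix.smul_apply, Matrix.one_apply, Matrix.sub_apply, h,
          Complex.real_smul, smul_eq_mul] <;> ring
    have hcomm : Commute (((t : ℂ) * μ) • (1 : Matrix m m ℂ)) (t • N) :=
      (Commute.one_left (t • N)).smul_left _
    rw [hsplit, Matrix.exp_add_of_commute _ _ hcomm, exp_smul_one,
      Matrix.smul_mul, Matrix.one_mul, Matrix.smul_mulVec]
    congr 1
    rw [exp_mulVec_eq]
    refine (tsum_eq_sum fun k hk => ?_).trans (Finset.sum_congr rfl fun k _ => ?_)
    · have hkk : k₀ ≤ k := by simpa using hk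
      rw [smul_pow, Matrix.smul_mulVec, hvanish k hkk, smul_zero, smul_zero]
    · rw [smul_pow, Matrix.smul_mulVec]
  set δ : ℝ := -μ.re with hδdef
  have hδpos : 0 < δ := by simp [hδdef]; linarith
  refine ⟨∑ k ∈ Finset.range k₀, ‖N ^ k *ᵥ v‖ * (2 / δ) ^ k,
    Finset.sum_nonneg fun k _ => by positivity, fun t ht => ?_⟩
  rw [key t, norm_smul]
  have habs : ‖Complex.exp ((t : ℂ) * μ)‖ = Real.exp (t * μ.re) := by
    rw [Complex.norm_exp]
    congr 1
    simp [Complex.mul_re]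
  rw [habs]
  have hsum : ‖∑ k ∈ Finset.range k₀, ((k.factorial : ℂ)⁻¹) • ((t ^ k : ℝ) • (N ^ k *ᵥ v))‖
      ≤ ∑ k ∈ Finset.range k₀, ((k.factorial : ℝ)⁻¹ * t ^ k * ‖N ^ k *ᵥ v‖) := by
    refine (norm_sum_le _ _).trans (Finset.sum_le_sum fun k _ => ?_)
    rw [norm_smul, norm_smul, norm_inv, Complex.norm_natCast, Real.norm_eq_abs,
      abs_pow, abs_of_nonneg ht, mul_assoc]
  calc Real.exp (t * μ.re) * ‖∑ k ∈ Finset.range k₀,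
        ((k.factorial : ℂ)⁻¹) • ((t ^ k : ℝ) • (N ^ k *ᵥ v))‖
      ≤ Real.exp (t * μ.re) *
        ∑ k ∈ Finset.range k₀, ((k.factorial : ℝ)⁻¹ * t ^ k * ‖N ^ k *ᵥ v‖) := by
        exact mul_le_mul_of_nonneg_left hsum (Real.exp_nonneg _)
    _ = ∑ k ∈ Finset.range k₀,
        Real.exp (t * μ.re) * ((k.factorial : ℝ)⁻¹ * t ^ k * ‖N ^ k *ᵥ v‖) :=
        Finset.mul_sum _ _ _
    _ ≤ ∑ k ∈ Finset.range k₀, ‖N ^ k *ᵥ v‖ * (2 / δ) ^ k * Real.exp (μ.re / 2 * t) := by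
        refine Finset.sum_le_sum fun k _ => ?_
        have hδ0 : (δ:ℝ) ≠ 0 := ne_of_gt hδpos
        have hfac : t ^ k * (k.factorial : ℝ)⁻¹ ≤ Real.exp (δ / 2 * t) * (2 / δ) ^ k := by
          have h1 : (δ / 2 * t) ^ k / (k.factorial : ℝ) ≤ Real.exp (δ / 2 * t) :=
            Real.pow_div_factorial_le_exp (δ / 2 * t) (mul_nonneg (by linarith) ht) k
          have h3 : (δ / 2 * t) ^ k * (2 / δ) ^ k = t ^ k := by
            rw [← mul_pow]
            congr 1
            field_simp
          have h2 : t ^ k * (k.factorial : ℝ)⁻¹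
              = ((δ / 2 * t) ^ k / (k.factorial : ℝ)) * (2 / δ) ^ k := by
            rw [div_mul_eq_mul_div, h3, div_eq_mul_inv]
          rw [h2]
          exact mul_le_mul_of_nonneg_right h1 (by positivity)
        calc Real.exp (t * μ.re) * ((k.factorial : ℝ)⁻¹ * t ^ k * ‖N ^ k *ᵥ v‖)
            = (t ^ k * (k.factorial : ℝ)⁻¹) * ‖N ^ k *ᵥ v‖ * Real.exp (t * μ.re) := by ring
          _ ≤ (Real.exp (δ / 2 * t) * (2 / δ) ^ k) * ‖N ^ k *ᵥ v‖ * Real.exp (t * μ.re) := by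
              exact mul_le_mul_of_nonneg_right
                (mul_le_mul_of_nonneg_right hfac (norm_nonneg _)) (Real.exp_nonneg _)
          _ = ‖N ^ k *ᵥ v‖ * (2 / δ) ^ k * (Real.exp (δ / 2 * t) * Real.exp (t * μ.re)) := by
              ring
          _ = ‖N ^ k *ᵥ v‖ * (2 / δ) ^ k * Real.exp (μ.re / 2 * t) := by
              rw [← Real.exp_add]
              congr 1
              rw [hδdef]
              ring
    _ = (∑ k ∈ Finset.range k₀, ‖N ^ k *ᵥ v‖ * (2 / δ) ^ k) * Real.exp (μ.re / 2 * t) :=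
        (Finset.sum_mul _ _ _).symm

lemma vec_decay_all (M : Matrix m m ℝ)
    (hM : ∀ μ ∈ spectrum ℂ (M.map (Complex.ofReal · : ℝ → ℂ)), μ.re < 0) (v : m → ℂ) :
    ∃ C ε : ℝ, 0 < ε ∧ 0 ≤ C ∧ ∀ t : ℝ, 0 ≤ t →
      ‖exp (t • M.map (Complex.ofReal · : ℝ → ℂ)) *ᵥ v‖ ≤ C * Real.exp (-ε * t) := by
  classical
  set Mc := M.map (Complex.ofReal · : ℝ → ℂ) with hMc
  set f := Matrix.toLinAlgEquiv' Mc with hf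
  have hmem : v ∈ ⨆ μ : ℂ, Module.End.maxGenEigenspace f μ := by
    rw [Module.End.iSup_maxGenEigenspace_eq_top f]
    exact Submodule.mem_top
  obtain ⟨a, ha, hsum⟩ := (Submodule.mem_iSup_iff_exists_finsupp _ v).1 hmem
  -- P-predicate
  set P : (ℝ → (m → ℂ)) → Prop := fun w => ∃ C ε : ℝ, 0 < ε ∧ 0 ≤ C ∧
    ∀ t : ℝ, 0 ≤ t → ‖w t‖ ≤ C * Real.exp (-ε * t) with hP
  have Padd : ∀ w₁ w₂, P w₁ → P w₂ → P (w₁ + w₂) := by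
    rintro w₁ w₂ ⟨C₁, ε₁, hε₁, hC₁, h₁⟩ ⟨C₂, ε₂, hε₂, hC₂, h₂⟩
    refine ⟨C₁ + C₂, min ε₁ ε₂, lt_min hε₁ hε₂, by linarith, fun t ht => ?_⟩
    have e₁ : Real.exp (-ε₁ * t) ≤ Real.exp (-(min ε₁ ε₂) * t) := by
      apply Real.exp_le_exp.2
      have : min ε₁ ε₂ ≤ ε₁ := min_le_left _ _
      nlinarith
    have e₂ : Real.exp (-ε₂ * t) ≤ Real.exp (-(min ε₁ ε₂) * t) := by
      apply Real.exp_le_exp.2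
      have : min ε₁ ε₂ ≤ ε₂ := min_le_right _ _
      nlinarith
    calc ‖(w₁ + w₂) t‖ ≤ ‖w₁ t‖ + ‖w₂ t‖ := norm_add_le _ _
      _ ≤ C₁ * Real.exp (-ε₁ * t) + C₂ * Real.exp (-ε₂ * t) := add_le_add (h₁ t ht) (h₂ t ht)
      _ ≤ C₁ * Real.exp (-(min ε₁ ε₂) * t) + C₂ * Real.exp (-(min ε₁ ε₂) * t) :=
          add_le_add (mul_le_mul_of_nonneg_left e₁ hC₁) (mul_le_mul_of_nonneg_left e₂ hC₂)
      _ = (C₁ + C₂) * Real.exp (-(min ε₁ ε₂) * t) := by ring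
  have Pzero : P 0 := ⟨0, 1, one_pos, le_refl _, fun t ht => by simp [Real.exp_nonneg]⟩
  have hdecomp : (fun t : ℝ => exp (t • Mc) *ᵥ v)
      = ∑ μ ∈ a.support, (fun t : ℝ => exp (t • Mc) *ᵥ a μ) := by
    funext t
    rw [← hsum]
    rw [Finsupp.sum]
    rw [Finset.sum_apply]
    exact map_sum (Matrix.mulVecLin (exp (t • Mc))) _ _
  have hbase : ∀ μ ∈ a.support, P (fun t : ℝ => exp (t • Mc) *ᵥ a μ) := by
    intro μ hμs
    have hvμ : a μ ∈ Module.End.maxGenEigenspace f μ := ha μ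
    have hne : a μ ≠ 0 := Finsupp.mem_support_iff.1 hμs
    have hμspec : μ ∈ spectrum ℂ Mc := by
      rw [← AlgEquiv.spectrum_eq (Matrix.toLinAlgEquiv' (n := m) (R := ℂ)) Mc]
      rw [← Module.End.hasEigenvalue_iff_mem_spectrum]
      refine Module.End.hasEigenvalue_of_hasGenEigenvalue (k := Module.finrank ℂ (m → ℂ)) ?_
      rw [Module.End.hasGenEigenvalue_iff]
      intro hbot
      rw [← Module.End.maxGenEigenspace_eq_genEigenspace_finrank] at hbot
      exact hne (by rw [hbot] at hvμ; simpa using hvμ)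
    have hre : μ.re < 0 := hM μ hμspec
    obtain ⟨C, hC, hb⟩ := vec_decay Mc hre (a μ) hvμ
    exact ⟨C, -μ.re / 2, by linarith, hC, fun t ht => by
      have := hb t ht
      rw [show -(-μ.re / 2) * t = μ.re / 2 * t by ring]
      exact this⟩
  have := Finset.sum_induction _ P Padd Pzero hbase
  rw [← hdecomp] at this
  exact this

lemma exp_map_complex (M : Matrix m m ℝ) (t : ℝ) :
    (exp (t • M)).map (Complex.ofReal · : ℝ → ℂ)
      = exp (t • M.map (Complex.ofReal · : ℝ → ℂ)) := by
  have hcont : Continuous fun A : Matrix m m ℝ => A.map (Complex.ofReal · : ℝ → ℂ) :=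
    continuous_matrix fun i j => Complex.continuous_ofReal.comp ((continuous_apply j).comp (continuous_apply i))
  have h1 := map_exp (Complex.ofRealHom.mapMatrix (m := m)) hcont (t • M)
  have h2 : Complex.ofRealHom.mapMatrix (t • M) = t • M.map (Complex.ofReal · : ℝ → ℂ) := by
    ext i j
    simp [Complex.real_smul]
  have h3 : (exp : Matrix m m ℂ → Matrix m m ℂ) = exp := rfl
  calc (exp (t • M)).map (Complex.ofReal · : ℝ → ℂ)
      = Complex.ofRealHom.mapMatrix (exp (t • M)) := rfl
    _ = exp (Complex.ofRealHom.mapMatrix (t • M)) := h1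
    _ = exp (t • M.map (Complex.ofReal · : ℝ → ℂ)) := by rw [h2, h3]

lemma exp_entry_decay' (M : Matrix m m ℝ)
    (hM : ∀ μ ∈ spectrum ℂ (M.map (Complex.ofReal · : ℝ → ℂ)), μ.re < 0) :
    ∃ C ε : ℝ, 0 < ε ∧ 0 ≤ C ∧ ∀ t : ℝ, 0 ≤ t → ∀ i j,
      |exp (t • M) i j| ≤ C * Real.exp (-ε * t) := by
  classical
  cases isEmpty_or_nonempty m with
  | inl h => exact ⟨0, 1, one_pos, le_refl _, fun t ht i j => (IsEmpty.false i).elim⟩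
  | inr h =>
    choose Cf εf hε hC hb using fun j : m => vec_decay_all M hM (Pi.single j 1)
    refine ⟨Finset.univ.sup' Finset.univ_nonempty Cf,
      Finset.univ.inf' Finset.univ_nonempty εf,
      ?_, ?_, fun t ht i j => ?_⟩
    · obtain ⟨j, _, hj⟩ := Finset.exists_mem_eq_inf' Finset.univ_nonempty εf
      rw [hj]; exact hε j
    · obtain ⟨j, _, hj⟩ := Finset.exists_mem_eq_sup' Finset.univ_nonempty Cf
      rw [hj]; exact hC j
    · have hentry : |exp (t • M) i j|
          = ‖(exp (t • M.map (Complex.ofReal · : ℝ → ℂ))) i j‖ := by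
        rw [← exp_map_complex]
        simp [Matrix.map_apply, Complex.norm_real]
      have hvec : (exp (t • M.map (Complex.ofReal · : ℝ → ℂ))) i j
          = (exp (t • M.map (Complex.ofReal · : ℝ → ℂ)) *ᵥ Pi.single j 1) i := by
        rw [Matrix.mulVec_single]
        simp
      have h1 : ‖(exp (t • M.map (Complex.ofReal · : ℝ → ℂ)) *ᵥ Pi.single j 1) i‖
          ≤ ‖exp (t • M.map (Complex.ofReal · : ℝ → ℂ)) *ᵥ Pi.single j 1‖ :=
        norm_le_pi_norm _ i
      have h2 := hb j t ht
      have h3 : Cf j ≤ Finset.univ.sup' Finset.univ_nonempty Cf :=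
        Finset.le_sup' Cf (Finset.mem_univ j)
      have h4 : Finset.univ.inf' Finset.univ_nonempty εf ≤ εf j :=
        Finset.inf'_le εf (Finset.mem_univ j)
      have h5 : Real.exp (-εf j * t) ≤ Real.exp (-(Finset.univ.inf' Finset.univ_nonempty εf) * t) := by
        apply Real.exp_le_exp.2
        nlinarith
      calc |exp (t • M) i j|
          = ‖(exp (t • M.map (Complex.ofReal · : ℝ → ℂ)) *ᵥ Pi.single j 1) i‖ := by
            rw [hentry, hvec]
        _ ≤ ‖exp (t • M.map (Complex.ofReal · : ℝ → ℂ)) *ᵥ Pi.single j 1‖ := h1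
        _ ≤ Cf j * Real.exp (-εf j * t) := h2
        _ ≤ Finset.univ.sup' Finset.univ_nonempty Cf
            * Real.exp (-(Finset.univ.inf' Finset.univ_nonempty εf) * t) := by
            apply mul_le_mul h3 h5 (Real.exp_nonneg _)
            obtain ⟨j', _, hj'⟩ := Finset.exists_mem_eq_sup' Finset.univ_nonempty Cf
            rw [hj']; exact hC j'
        _ = _ := rfl

end Decay
end GramianAux

attribute [local instance] Matrix.normedAddCommGroup Matrix.normedSpace

namespace GramianAux

variable {m n q r : Type*} [Fintype m] [DecidableEq m] [Fintype n] [DecidableEq n]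
  [Fintype q] [DecidableEq q] [Fintype r] [DecidableEq r]

noncomputable instance matContinuousENorm : ContinuousENorm (Matrix m m ℝ) :=
  SeminormedAddGroup.toContinuousENorm

instance matPseudoMetrizable : TopologicalSpace.PseudoMetrizableSpace (Matrix m m ℝ) :=
  inferInstanceAs (TopologicalSpace.PseudoMetrizableSpace (m → m → ℝ))

/-- decay hypothesis -/
def DecayH (α : Matrix m m ℝ) : Prop :=
  ∃ C ε : ℝ, 0 < ε ∧ 0 ≤ C ∧ ∀ t : ℝ, 0 ≤ t → ∀ i j,
    |NormedSpace.exp (t • α) i j| ≤ C * Real.exp (-ε * t)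

lemma hasDerivAt_matrix {f : ℝ → Matrix m n ℝ} {f' : Matrix m n ℝ} {t : ℝ}
    (h : ∀ i j, HasDerivAt (fun s => f s i j) (f' i j) t) : HasDerivAt f f' t :=
  hasDerivAt_pi.2 fun i => hasDerivAt_pi.2 fun j => h i j

lemma hasDerivAt_entry_mul {f : ℝ → Matrix m n ℝ} {g : ℝ → Matrix n q ℝ}
    {f' : Matrix m n ℝ} {g' : Matrix n q ℝ} {t : ℝ}
    (hf : ∀ i j, HasDerivAt (fun s => f s i j) (f' i j) t)
    (hg : ∀ i j, HasDerivAt (fun s => g s i j) (g' i j) t) :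
    ∀ i j, HasDerivAt (fun s => (f s * g s) i j) ((f' * g t + f t * g') i j) t := by
  intro i j
  have h : HasDerivAt (fun s => ∑ k, f s i k * g s k j)
      (∑ k, (f' i k * g t k j + f t i k * g' k j)) t :=
    HasDerivAt.fun_sum fun k _ => (hf i k).mul (hg k j)
  have e1 : (fun s => (f s * g s) i j) = fun s => ∑ k, f s i k * g s k j := by
    funext s; rw [Matrix.mul_apply]
  have e2 : (f' * g t + f t * g') i j = ∑ k, (f' i k * g t k j + f t i k * g' k j) := by
    rw [Matrix.add_apply, Matrix.mul_apply, Matrix.mul_apply, Finset.sum_add_distrib]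
  rw [e1, e2]; exact h

lemma entry_triple {A : Matrix m n ℝ} {B : Matrix n q ℝ} {C : Matrix q r ℝ} {c1 c2 : ℝ}
    (hA : ∀ i j, |A i j| ≤ c1) (hC : ∀ i j, |C i j| ≤ c2) (hc1 : 0 ≤ c1) (i : m) (j : r) :
    |(A * B * C) i j| ≤ c1 * c2 * ∑ k, ∑ l, |B k l| := by
  have habs : |(A * B * C) i j| ≤ ∑ l, ∑ k, |A i k| * |B k l| * |C l j| := by
    rw [Matrix.mul_apply]
    refine (Finset.abs_sum_le_sum_abs _ _).trans (Finset.sum_le_sum fun l _ => ?_)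
    rw [abs_mul, Matrix.mul_apply]
    calc |∑ k, A i k * B k l| * |C l j|
        ≤ (∑ k, |A i k * B k l|) * |C l j| :=
          mul_le_mul_of_nonneg_right (Finset.abs_sum_le_sum_abs _ _) (abs_nonneg _)
      _ = ∑ k, |A i k| * |B k l| * |C l j| := by
          rw [Finset.sum_mul]
          exact Finset.sum_congr rfl fun k _ => by rw [abs_mul]
  refine habs.trans ?_
  calc ∑ l, ∑ k, |A i k| * |B k l| * |C l j|
      ≤ ∑ l, ∑ k, c1 * |B k l| * c2 := by
        refine Finset.sum_le_sum fun l _ => Finset.sum_le_sum fun k _ => ?_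
        have h1 : |A i k| * |B k l| ≤ c1 * |B k l| :=
          mul_le_mul_of_nonneg_right (hA i k) (abs_nonneg _)
        calc |A i k| * |B k l| * |C l j| ≤ (c1 * |B k l|) * |C l j| :=
              mul_le_mul_of_nonneg_right h1 (abs_nonneg _)
          _ ≤ (c1 * |B k l|) * c2 := mul_le_mul_of_nonneg_left (hC l j) (by positivity)
    _ = c1 * c2 * ∑ k, ∑ l, |B k l| := by
        rw [Finset.sum_comm]
        simp_rw [Finset.mul_sum]
        refine Finset.sum_congr rfl fun k _ => Finset.sum_congr rfl fun l _ => by ring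

lemma decayH_transpose {α : Matrix m m ℝ} (h : DecayH α) : DecayH αᵀ := by
  obtain ⟨C, ε, hε, hC, hb⟩ := h
  refine ⟨C, ε, hε, hC, fun t ht i j => ?_⟩
  rw [show t • αᵀ = (t • α)ᵀ from (Matrix.transpose_smul t α).symm, Matrix.exp_transpose,
    Matrix.transpose_apply]
  exact hb t ht j i

lemma conj_decay (α : Matrix m m ℝ) (B : Matrix m m ℝ) (hα : DecayH α) :
    ∃ D ε : ℝ, 0 < ε ∧ 0 ≤ D ∧ ∀ t : ℝ, 0 ≤ t → ∀ i j,
      |(NormedSpace.exp (t • α) * B * NormedSpace.exp (t • αᵀ)) i j|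
        ≤ D * Real.exp (-ε * t) := by
  obtain ⟨C, ε, hε, hC, hb⟩ := hα
  obtain ⟨C', ε', hε', hC', hb'⟩ := decayH_transpose ⟨C, ε, hε, hC, hb⟩
  refine ⟨(C * (C' * Real.exp 0)) * ∑ k, ∑ l, |B k l|, min ε ε', lt_min hε hε', ?_, ?_⟩
  · have : (0:ℝ) ≤ ∑ k, ∑ l, |B k l| :=
      Finset.sum_nonneg fun k _ => Finset.sum_nonneg fun l _ => abs_nonneg _
    positivity
  intro t ht i j
  have h1 := entry_triple (B := B) (fun i j => hb t ht i j) (fun i j => hb' t ht i j)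
    (by positivity) i j
  refine h1.trans ?_
  have hee : (C * Real.exp (-ε * t)) * (C' * Real.exp (-ε' * t))
      ≤ (C * (C' * Real.exp 0)) * Real.exp (-(min ε ε') * t) := by
    have e1 : Real.exp (-ε * t) ≤ Real.exp (-(min ε ε') * t) := by
      apply Real.exp_le_exp.2
      have := min_le_left ε ε'
      nlinarith
    have e2 : Real.exp (-ε' * t) ≤ Real.exp 0 := by
      apply Real.exp_le_exp.2
      nlinarith
    calc (C * Real.exp (-ε * t)) * (C' * Real.exp (-ε' * t))
        ≤ (C * Real.exp (-(min ε ε') * t)) * (C' * Real.exp 0) := by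
          apply mul_le_mul (mul_le_mul_of_nonneg_left e1 hC)
            (mul_le_mul_of_nonneg_left e2 hC') (by positivity) (by positivity)
      _ = (C * (C' * Real.exp 0)) * Real.exp (-(min ε ε') * t) := by ring
  have hBnn : (0:ℝ) ≤ ∑ k, ∑ l, |B k l| :=
    Finset.sum_nonneg fun k _ => Finset.sum_nonneg fun l _ => abs_nonneg _
  calc (C * Real.exp (-ε * t)) * (C' * Real.exp (-ε' * t)) * ∑ k, ∑ l, |B k l|
      ≤ ((C * (C' * Real.exp 0)) * Real.exp (-(min ε ε') * t)) * ∑ k, ∑ l, |B k l| :=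
        mul_le_mul_of_nonneg_right hee hBnn
    _ = ((C * (C' * Real.exp 0)) * ∑ k, ∑ l, |B k l|) * Real.exp (-(min ε ε') * t) := by
        ring

lemma conj_entry_hasDerivAt (α : Matrix m m ℝ) (B : Matrix m m ℝ) (t : ℝ) :
    ∀ i j, HasDerivAt (fun s => (NormedSpace.exp (s • α) * B * NormedSpace.exp (s • αᵀ)) i j)
      (((α * NormedSpace.exp (t • α) * B) * NormedSpace.exp (t • αᵀ)
        + (NormedSpace.exp (t • α) * B) * (αᵀ * NormedSpace.exp (t • αᵀ))) i j) t := by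
  have hE := entry_hasDerivAt α t
  have hF := entry_hasDerivAt αᵀ t
  have hconst : ∀ i j, HasDerivAt (fun _ : ℝ => B i j) ((0 : Matrix m m ℝ) i j) t := by
    intro i j
    simpa using hasDerivAt_const t (B i j)
  have hEB : ∀ i j, HasDerivAt (fun s => (NormedSpace.exp (s • α) * B) i j)
      ((α * NormedSpace.exp (t • α) * B) i j) t := by
    intro i j
    have h := hasDerivAt_entry_mul hE hconst i j
    have : α * NormedSpace.exp (t • α) * B
        = α * NormedSpace.exp (t • α) * B + NormedSpace.exp (t • α) * 0 := by
      rw [Matrix.mul_zero, add_zero]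
    rw [this]
    exact h
  exact hasDerivAt_entry_mul hEB hF

lemma conj_continuous (α : Matrix m m ℝ) (B : Matrix m m ℝ) :
    Continuous (fun t : ℝ => NormedSpace.exp (t • α) * B * NormedSpace.exp (t • αᵀ)) := by
  apply continuous_matrix
  intro i j
  exact continuous_iff_continuousAt.2 fun t => (conj_entry_hasDerivAt α B t i j).continuousAt

lemma conj_integrableOn (α : Matrix m m ℝ) (B : Matrix m m ℝ) (hα : DecayH α) :
    IntegrableOn (fun t : ℝ => NormedSpace.exp (t • α) * B * NormedSpace.exp (t • αᵀ))
      (Set.Ioi (0:ℝ)) := by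
  obtain ⟨D, ε, hε, hD, hb⟩ := conj_decay α B hα
  refine Integrable.mono' ((exp_neg_integrableOn_Ioi 0 hε).const_mul D)
    ((conj_continuous α B).aestronglyMeasurable.restrict) ?_
  rw [ae_restrict_iff' measurableSet_Ioi]
  refine ae_of_all _ fun t ht => ?_
  have ht' : (0:ℝ) ≤ t := le_of_lt ht
  rw [Matrix.norm_le_iff (by positivity)]
  intro i j
  rw [Real.norm_eq_abs]
  exact hb t ht' i j

lemma conj_tendsto (α : Matrix m m ℝ) (B : Matrix m m ℝ) (hα : DecayH α) :
    Filter.Tendsto (fun t : ℝ => NormedSpace.exp (t • α) * B * NormedSpace.exp (t • αᵀ))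
      Filter.atTop (nhds 0) := by
  obtain ⟨D, ε, hε, hD, hb⟩ := conj_decay α B hα
  have hlim : Filter.Tendsto (fun t : ℝ => D * Real.exp (-ε * t)) Filter.atTop (nhds 0) := by
    have h1 : Filter.Tendsto (fun t : ℝ => -ε * t) Filter.atTop Filter.atBot :=
      Filter.Tendsto.const_mul_atTop_of_neg (neg_neg_iff_pos.2 hε) Filter.tendsto_id
    have h2 := Real.tendsto_exp_atBot.comp h1
    have := h2.const_mul D
    simpa using this
  refine squeeze_zero_norm' ?_ hlim
  filter_upwards [Filter.eventually_ge_atTop (0:ℝ)] with t ht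
  rw [Matrix.norm_le_iff (by positivity)]
  intro i j
  rw [Real.norm_eq_abs]
  exact hb t ht i j


noncomputable def lyapOp (α : Matrix m m ℝ) : Matrix m m ℝ →L[ℝ] Matrix m m ℝ :=
  LinearMap.toContinuousLinearMap
    { toFun := fun γ => α * γ + γ * αᵀ
      map_add' := fun γ δ => by
        show α * (γ + δ) + (γ + δ) * αᵀ = _
        rw [Matrix.mul_add, Matrix.add_mul]
        abel
      map_smul' := fun c γ => by
        show α * (c • γ) + (c • γ) * αᵀ = _
        rw [Matrix.mul_smul, Matrix.smul_mul, ← smul_add]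
        rfl }

@[simp] lemma lyapOp_apply (α γ : Matrix m m ℝ) : lyapOp α γ = α * γ + γ * αᵀ := rfl

lemma lyap_solves (α β : Matrix m m ℝ) (hα : DecayH α) :
    α * lyap α β + lyap α β * αᵀ + β = 0 := by
  set u : ℝ → Matrix m m ℝ :=
    fun t => NormedSpace.exp (t • α) * β * NormedSpace.exp (t • αᵀ) with hu
  have huint : IntegrableOn u (Set.Ioi (0:ℝ)) := conj_integrableOn α β hα
  have hderiv : ∀ t : ℝ, HasDerivAt u (lyapOp α (u t)) t := by
    intro t
    apply hasDerivAt_matrix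
    intro i j
    have h := conj_entry_hasDerivAt α β t i j
    have hident : (α * NormedSpace.exp (t • α) * β) * NormedSpace.exp (t • αᵀ)
        + (NormedSpace.exp (t • α) * β) * (αᵀ * NormedSpace.exp (t • αᵀ))
        = lyapOp α (u t) := by
      rw [lyapOp_apply, hu, exp_comm αᵀ t]
      simp only [Matrix.mul_assoc]
    rw [hident] at h
    exact h
  have hderiv' : ∀ x ∈ Set.Ici (0:ℝ), HasDerivAt u (lyapOp α (u x)) x := fun x _ => hderiv x
  have hint' : IntegrableOn (fun t => lyapOp α (u t)) (Set.Ioi (0:ℝ)) :=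
    (lyapOp α).integrable_comp huint
  have htend : Filter.Tendsto u Filter.atTop (nhds 0) := conj_tendsto α β hα
  have hftc := integral_Ioi_of_hasDerivAt_of_tendsto' hderiv' hint' htend
  have hcomm := (lyapOp α).integral_comp_comm huint
  have hftc : lyapOp α (∫ x in Set.Ioi (0:ℝ), u x) = 0 - u 0 := hcomm.symm.trans hftc
  have hu0 : u 0 = β := by
    rw [hu]
    simp only [zero_smul, NormedSpace.exp_zero, Matrix.one_mul, Matrix.mul_one]
  have hL : (∫ t in Set.Ioi (0:ℝ), u t) = lyap α β := rfl
  rw [hL, hu0, zero_sub, lyapOp_apply] at hftc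
  rw [hftc]
  abel

lemma lyap_unique (α β Q : Matrix m m ℝ) (hα : DecayH α)
    (hQ : α * Q + Q * αᵀ + β = 0) : Q = lyap α β := by
  have hαQ : α * Q + Q * αᵀ = -β := by
    have := hQ
    rwa [add_eq_zero_iff_eq_neg] at this
  set u : ℝ → Matrix m m ℝ :=
    fun t => NormedSpace.exp (t • α) * β * NormedSpace.exp (t • αᵀ) with hu
  set h : ℝ → Matrix m m ℝ :=
    fun t => NormedSpace.exp (t • α) * Q * NormedSpace.exp (t • αᵀ) with hh
  have huint : IntegrableOn u (Set.Ioi (0:ℝ)) := conj_integrableOn α β hα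
  have hderiv : ∀ t : ℝ, HasDerivAt h (-(u t)) t := by
    intro t
    apply hasDerivAt_matrix
    intro i j
    have hd := conj_entry_hasDerivAt α Q t i j
    have hident : (α * NormedSpace.exp (t • α) * Q) * NormedSpace.exp (t • αᵀ)
        + (NormedSpace.exp (t • α) * Q) * (αᵀ * NormedSpace.exp (t • αᵀ))
        = -(u t) := by
      rw [hu, exp_comm α t]
      calc (NormedSpace.exp (t • α) * α * Q) * NormedSpace.exp (t • αᵀ)
          + (NormedSpace.exp (t • α) * Q) * (αᵀ * NormedSpace.exp (t • αᵀ))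
          = NormedSpace.exp (t • α) * ((α * Q + Q * αᵀ) * NormedSpace.exp (t • αᵀ)) := by
            simp only [Matrix.mul_assoc, Matrix.add_mul, Matrix.mul_add]
        _ = -(NormedSpace.exp (t • α) * β * NormedSpace.exp (t • αᵀ)) := by
            rw [hαQ]
            simp only [Matrix.neg_mul, Matrix.mul_neg, Matrix.mul_assoc]
    rw [hident] at hd
    exact hd
  have hderiv' : ∀ x ∈ Set.Ici (0:ℝ), HasDerivAt h (-(u x)) x := fun x _ => hderiv x
  have hint' : IntegrableOn (fun t => -(u t)) (Set.Ioi (0:ℝ)) := huint.neg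
  have htend : Filter.Tendsto h Filter.atTop (nhds 0) := conj_tendsto α Q hα
  have hftc := integral_Ioi_of_hasDerivAt_of_tendsto' hderiv' hint' htend
  have hh0 : h 0 = Q := by
    rw [hh]
    simp only [zero_smul, NormedSpace.exp_zero, Matrix.one_mul, Matrix.mul_one]
  rw [integral_neg, hh0, zero_sub, neg_inj] at hftc
  exact hftc.symm


noncomputable def conjOp (S : Matrix q m ℝ) : Matrix q q ℝ →L[ℝ] Matrix m m ℝ :=
  LinearMap.toContinuousLinearMap
    { toFun := fun γ => Sᵀ * γ * S
      map_add' := fun γ δ => by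
        show Sᵀ * (γ + δ) * S = _
        rw [Matrix.mul_add, Matrix.add_mul]
      map_smul' := fun c γ => by
        show Sᵀ * (c • γ) * S = _
        rw [Matrix.mul_smul, Matrix.smul_mul]
        rfl }

@[simp] lemma conjOp_apply (S : Matrix q m ℝ) (γ : Matrix q q ℝ) :
    conjOp S γ = Sᵀ * γ * S := rfl

lemma lyap_conj {S : Matrix q m ℝ} {calAτ : Matrix m m ℝ} {Ahatτ : Matrix q q ℝ}
    (hcomm : S * calAτ = Ahatτ * S) (hhat : DecayH Ahatτᵀ) :
    lyap calAτᵀ (Sᵀ * S) = Sᵀ * lyap Ahatτᵀ 1 * S := by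
  have hpt : ∀ t : ℝ, NormedSpace.exp (t • calAτᵀ) * (Sᵀ * S)
        * NormedSpace.exp (t • calAτᵀᵀ)
      = conjOp S (NormedSpace.exp (t • Ahatτᵀ) * 1 * NormedSpace.exp (t • Ahatτᵀᵀ)) := by
    intro t
    rw [conjOp_apply, Matrix.transpose_transpose, Matrix.transpose_transpose]
    have hS := intertwine_exp hcomm t
    have h1 : NormedSpace.exp (t • calAτᵀ) = (NormedSpace.exp (t • calAτ))ᵀ := by
      rw [← Matrix.transpose_smul, Matrix.exp_transpose]
    have h2 : NormedSpace.exp (t • Ahatτᵀ) = (NormedSpace.exp (t • Ahatτ))ᵀ := by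
      rw [← Matrix.transpose_smul, Matrix.exp_transpose]
    rw [h1, h2, Matrix.mul_one]
    calc (NormedSpace.exp (t • calAτ))ᵀ * (Sᵀ * S) * NormedSpace.exp (t • calAτ)
        = (S * NormedSpace.exp (t • calAτ))ᵀ * (S * NormedSpace.exp (t • calAτ)) := by
          rw [Matrix.transpose_mul]
          simp only [Matrix.mul_assoc]
      _ = (NormedSpace.exp (t • Ahatτ) * S)ᵀ * (NormedSpace.exp (t • Ahatτ) * S) := by
          rw [hS]
      _ = Sᵀ * ((NormedSpace.exp (t • Ahatτ))ᵀ * NormedSpace.exp (t • Ahatτ)) * S := by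
          rw [Matrix.transpose_mul]
          simp only [Matrix.mul_assoc]
  have hint : IntegrableOn
      (fun t : ℝ => NormedSpace.exp (t • Ahatτᵀ) * 1 * NormedSpace.exp (t • Ahatτᵀᵀ))
      (Set.Ioi (0:ℝ)) := conj_integrableOn Ahatτᵀ 1 hhat
  calc lyap calAτᵀ (Sᵀ * S)
      = ∫ t in Set.Ioi (0:ℝ),
          conjOp S (NormedSpace.exp (t • Ahatτᵀ) * 1 * NormedSpace.exp (t • Ahatτᵀᵀ)) := by
        unfold lyap
        exact integral_congr_ae (ae_of_all _ fun t => hpt t)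
    _ = conjOp S (∫ t in Set.Ioi (0:ℝ),
          NormedSpace.exp (t • Ahatτᵀ) * 1 * NormedSpace.exp (t • Ahatτᵀᵀ)) :=
        (conjOp S).integral_comp_comm hint
    _ = Sᵀ * lyap Ahatτᵀ 1 * S := by
        rw [conjOp_apply]
        rfl

end GramianAux

open GramianAux

/-- (Lower-rank reduction of the observability Gramian.) If `S𝒜 = ÂS`
and both `𝒜_τ := 𝒜 − (1/(2τ))I` and `Â_τ := Â − (1/(2τ))I` are Hurwitz, then with
`𝒬̂ := 𝐋(Â_τᵀ, I)` (the unique solution of `Â_τᵀ𝒬̂ + 𝒬̂Â_τ + I = 0`), the matrix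
`Sᵀ𝒬̂S` is the unique solution of `𝒜_τᵀ𝒬 + 𝒬𝒜_τ + SᵀS = 0`; equivalently,
`𝐋(𝒜_τᵀ, SᵀS) = Sᵀ𝐋(Â_τᵀ, I)S`. -/
theorem observability_Gramian_reduction {N p : ℕ}
    (calA : Matrix (Fin N) (Fin N) ℝ) (Ahat : Matrix (Fin p) (Fin p) ℝ)
    (S : Matrix (Fin p) (Fin N) ℝ) (hint : S * calA = Ahat * S)
    (τ : ℝ) (hτ : 0 < τ)
    (calAτ : Matrix (Fin N) (Fin N) ℝ) (hcalAτ : calAτ = calA - (1 / (2 * τ)) • 1)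
    (Ahatτ : Matrix (Fin p) (Fin p) ℝ) (hAhatτ : Ahatτ = Ahat - (1 / (2 * τ)) • 1)
    (h1 : Hurwitz calAτ) (h2 : Hurwitz Ahatτ) :
    (Ahatτᵀ * lyap Ahatτᵀ 1 + lyap Ahatτᵀ 1 * Ahatτ + 1 = 0)
    ∧ (calAτᵀ * (Sᵀ * lyap Ahatτᵀ 1 * S) + (Sᵀ * lyap Ahatτᵀ 1 * S) * calAτ + Sᵀ * S = 0)
    ∧ (∀ calQ : Matrix (Fin N) (Fin N) ℝ,
        calAτᵀ * calQ + calQ * calAτ + Sᵀ * S = 0 → calQ = Sᵀ * lyap Ahatτᵀ 1 * S)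
    ∧ lyap calAτᵀ (Sᵀ * S) = Sᵀ * lyap Ahatτᵀ 1 * S := by
  have hcomm : S * calAτ = Ahatτ * S := by
    rw [hcalAτ, hAhatτ, Matrix.mul_sub, Matrix.sub_mul, hint, Matrix.mul_smul,
      Matrix.smul_mul, Matrix.mul_one, Matrix.one_mul]
  have hdecayAhat : DecayH Ahatτ := exp_entry_decay' Ahatτ h2
  have hdecayA : DecayH calAτ := exp_entry_decay' calAτ h1
  have hhatT : DecayH Ahatτᵀ := decayH_transpose hdecayAhat
  have hcalT : DecayH calAτᵀ := decayH_transpose hdecayA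
  have part1raw := lyap_solves Ahatτᵀ 1 hhatT
  rw [Matrix.transpose_transpose] at part1raw
  have part4 : lyap calAτᵀ (Sᵀ * S) = Sᵀ * lyap Ahatτᵀ 1 * S := lyap_conj hcomm hhatT
  have hST : calAτᵀ * Sᵀ = Sᵀ * Ahatτᵀ := by
    rw [← Matrix.transpose_mul, hcomm, Matrix.transpose_mul]
  have part2 : calAτᵀ * (Sᵀ * lyap Ahatτᵀ 1 * S) + (Sᵀ * lyap Ahatτᵀ 1 * S) * calAτ
      + Sᵀ * S = 0 := by
    have hST2 : ∀ X : Matrix (Fin p) (Fin N) ℝ,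
        calAτᵀ * (Sᵀ * X) = Sᵀ * (Ahatτᵀ * X) := fun X => by
      rw [← Matrix.mul_assoc, hST, Matrix.mul_assoc]
    have hfac := congrArg (fun X => Sᵀ * X * S) part1raw
    simp only [Matrix.mul_add, Matrix.add_mul, Matrix.mul_one, Matrix.mul_zero,
      Matrix.zero_mul, Matrix.mul_assoc] at hfac ⊢
    rw [hcomm, hST2]
    convert hfac using 2
  have part3 : ∀ calQ : Matrix (Fin N) (Fin N) ℝ,
      calAτᵀ * calQ + calQ * calAτ + Sᵀ * S = 0 → calQ = Sᵀ * lyap Ahatτᵀ 1 * S := by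
    intro calQ hQ
    have hQ' : calAτᵀ * calQ + calQ * calAτᵀᵀ + Sᵀ * S = 0 := by
      rw [Matrix.transpose_transpose]
      exact hQ
    rw [lyap_unique calAτᵀ (Sᵀ * S) calQ hcalT hQ']
    exact part4
  exact ⟨part1raw, part2, part3, part4⟩
end
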